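/- arXiv:2106.14940 — 15 statements merged into one kernel-verified Lean document; each statement's English description precedes it below -/
import Mathlib

section
/- Let c ∈ ℂ with Re(c) ≥ 0, Im(c) ≥ 0 and c ≠ 4, and let A, B, α, β be the associated Loewner parameters for the driving function c√(1−t). Then Re(A) ≥ 0, Im(A) ≥ 0 and |A| ≥ 2; Re(B) ≥ 0, Im(B) ≤ 0 and |B| ≤ 2; Re(α) ≤ 1/2 and Im(α) ≥ 0; and Re(β) ≥ 1/2 and Im(β) ≤ 0. -/
set_option maxHeartbeats 1600000 in
theorem loewner_parameters_location
    (c A B α β : ℂ) (hcre : 0 ≤ c.re) (hcim : 0 ≤ c.im) (hc4 : c ≠ 4)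
    (hA : A = (c + (c ^ 2 - 16) ^ ((1 : ℂ) / 2)) / 2)
    (hB : B = (c - (c ^ 2 - 16) ^ ((1 : ℂ) / 2)) / 2)
    (hα : α = (1 - c / (c ^ 2 - 16) ^ ((1 : ℂ) / 2)) / 2)
    (hβ : β = (1 + c / (c ^ 2 - 16) ^ ((1 : ℂ) / 2)) / 2) :
    (0 ≤ A.re ∧ 0 ≤ A.im ∧ 2 ≤ ‖A‖) ∧
    (0 ≤ B.re ∧ B.im ≤ 0 ∧ ‖B‖ ≤ 2) ∧
    (α.re ≤ 1 / 2 ∧ 0 ≤ α.im) ∧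
    (1 / 2 ≤ β.re ∧ β.im ≤ 0) := by
  set s : ℂ := (c ^ 2 - 16) ^ ((1 : ℂ) / 2) with hs
  have hw : c ^ 2 - 16 ≠ 0 := by
    intro h
    have h2 : (c - 4) * (c + 4) = 0 := by linear_combination h
    rcases mul_eq_zero.mp h2 with h3 | h3
    · exact hc4 (by linear_combination h3)
    · have : c = -4 := by linear_combination h3
      rw [this] at hcre
      norm_num at hcre
  have him : 0 ≤ (c ^ 2 - 16).im := by
    simp [Complex.sub_im, sq, Complex.mul_im]
    positivity
  have hsq : s ^ 2 = c ^ 2 - 16 := by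
    rw [hs, sq, ← Complex.cpow_add _ _ hw]; norm_num
  have hbr : 0 ≤ s.re ∧ 0 ≤ s.im := by
    have h12 : ((1:ℂ)/2) = ((1/2 : ℝ) : ℂ) := by norm_num
    rw [hs, h12, Complex.cpow_def_of_ne_zero hw]
    have hc' : 0 ≤ Real.cos ((c^2-16).arg * (1/2)) := by
      apply Real.cos_nonneg_of_mem_Icc
      constructor
      · nlinarith [Complex.neg_pi_lt_arg (c^2-16), Real.pi_pos]
      · nlinarith [Complex.arg_le_pi (c^2-16), Real.pi_pos]
    have hsn : 0 ≤ Real.sin ((c^2-16).arg * (1/2)) := by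
      apply Real.sin_nonneg_of_nonneg_of_le_pi
      · have := Complex.arg_nonneg_iff.mpr him; linarith
      · nlinarith [Complex.arg_le_pi (c^2-16), Real.pi_pos]
    constructor <;>
    · simp only [Complex.exp_re, Complex.exp_im, Complex.mul_re, Complex.mul_im,
        Complex.log_re, Complex.log_im, Complex.ofReal_re, Complex.ofReal_im]
      ring_nf
      ring_nf at hc' hsn
      positivity
  obtain ⟨hsre, hsim⟩ := hbr
  have hsne : s ≠ 0 := by
    intro h; rw [h] at hsq; simp at hsq; exact hw hsq.symm
  clear_value s
  have hE1 : s.re * s.im = c.re * c.im := by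
    have := congrArg Complex.im hsq
    simp [sq, Complex.mul_im, Complex.sub_im] at this
    linarith
  have hE2 : s.re ^ 2 - s.im ^ 2 = c.re ^ 2 - c.im ^ 2 - 16 := by
    have := congrArg Complex.re hsq
    simp [sq, Complex.mul_re, Complex.sub_re] at this
    nlinarith [this]
  have key : c.im * s.re ≤ c.re * s.im := by
    have hprod : (s.re * c.re + s.im * c.im) * (s.im * c.re - s.re * c.im)
        = 16 * (c.re * c.im) := by
      linear_combination (c.re^2 - c.im^2) * hE1 - c.re * c.im * hE2
    have hQ : 0 ≤ s.re * c.re + s.im * c.im := by positivity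
    rcases lt_or_eq_of_le hQ with hQ' | hQ'
    · nlinarith [mul_nonneg hcre hcim]
    · have h1 : s.re * c.re = 0 := by nlinarith [mul_nonneg hsre hcre, mul_nonneg hsim hcim]
      have h2 : s.im * c.im = 0 := by nlinarith [mul_nonneg hsre hcre, mul_nonneg hsim hcim]
      have h3 : c.re * c.im = 0 := by nlinarith
      rcases mul_eq_zero.mp h3 with h4 | h4
      · have h5 : s.re * c.im = 0 := by
          by_contra h6
          have hci : 0 < c.im := lt_of_le_of_ne hcim (by intro h; apply h6; rw [← h]; ring)
          have hsi : s.im = 0 := by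
            rcases mul_eq_zero.mp h2 with h | h
            · exact h
            · exact absurd h (ne_of_gt hci)
          nlinarith [sq_nonneg s.re]
        nlinarith
      · rw [h4]; simp
        positivity
  -- components of A
  have hAre : A.re = (c.re + s.re)/2 := by
    rw [hA]; simp [Complex.div_re, Complex.normSq_apply]
  have hAim : A.im = (c.im + s.im)/2 := by
    rw [hA]; simp [Complex.div_im, Complex.normSq_apply]
  have hBre : B.re = (c.re - s.re)/2 := by
    rw [hB]; simp [Complex.div_re, Complex.normSq_apply]
  have hBim : B.im = (c.im - s.im)/2 := by
    rw [hB]; simp [Complex.div_im, Complex.normSq_apply]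
  have hA1 : 0 ≤ A.re := by rw [hAre]; positivity
  have hA2 : 0 ≤ A.im := by rw [hAim]; positivity
  -- A * B = 4
  have hAB : A * B = 4 := by
    rw [hA, hB]
    field_simp
    linear_combination (-1 : ℂ) * hsq
  -- normSq facts
  have hns : Complex.normSq A * Complex.normSq B = 16 := by
    rw [← map_mul, hAB]; norm_num [Complex.normSq_apply]
  have hord : Complex.normSq B ≤ Complex.normSq A := by
    simp only [Complex.normSq_apply, hAre, hAim, hBre, hBim]
    nlinarith [mul_nonneg hcre hsre, mul_nonneg hcim hsim]
  have hnsB : 0 ≤ Complex.normSq B := Complex.normSq_nonneg B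
  have hnsA4 : 4 ≤ Complex.normSq A := by nlinarith
  have hnsB4 : Complex.normSq B ≤ 4 := by nlinarith
  have habsA : 2 ≤ ‖A‖ := by
    rw [Complex.norm_def]
    have : (2:ℝ) = Real.sqrt 4 := by
      rw [show (4:ℝ) = 2^2 by norm_num, Real.sqrt_sq]; norm_num
    rw [this]
    exact Real.sqrt_le_sqrt hnsA4
  have habsB : ‖B‖ ≤ 2 := by
    rw [Complex.norm_def]
    have : (2:ℝ) = Real.sqrt 4 := by
      rw [show (4:ℝ) = 2^2 by norm_num, Real.sqrt_sq]; norm_num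
    rw [this]
    exact Real.sqrt_le_sqrt hnsB4
  -- B via 4/A
  have hAne : A ≠ 0 := by rintro rfl; simp at hAB
  have hB4 : B = 4 / A := by field_simp; linear_combination hAB
  have hB1 : 0 ≤ B.re := by
    rw [hB4]; simp [Complex.div_re]
    exact div_nonneg (by positivity) (Complex.normSq_nonneg A)
  have hB2 : B.im ≤ 0 := by
    rw [hB4]; simp [Complex.div_im]
    exact div_nonneg (by positivity) (Complex.normSq_nonneg A)
  -- c/s facts
  have ht1 : 0 ≤ (c/s).re := by
    rw [Complex.div_re]
    apply add_nonneg <;> exact div_nonneg (by positivity) (Complex.normSq_nonneg s)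
  have ht2 : (c/s).im ≤ 0 := by
    rw [Complex.div_im]
    apply sub_nonpos.mpr
    apply div_le_div_of_nonneg_right key (Complex.normSq_nonneg s)
  set t : ℂ := c / s with ht
  clear_value t
  have hαre : α.re = (1 - t.re)/2 := by
    rw [hα]; simp [Complex.div_re, Complex.normSq_apply]
  have hαim : α.im = -t.im/2 := by
    rw [hα]; simp [Complex.div_im, Complex.normSq_apply]
  have hβre : β.re = (1 + t.re)/2 := by
    rw [hβ]; simp [Complex.div_re, Complex.normSq_apply]
  have hβim : β.im = t.im/2 := by
    rw [hβ]; simp [Complex.div_im, Complex.normSq_apply]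
  exact ⟨⟨hA1, hA2, habsA⟩, ⟨hB1, hB2, habsB⟩,
    ⟨by rw [hαre]; linarith, by rw [hαim]; linarith⟩,
    ⟨by rw [hβre]; linarith, by rw [hβim]; linarith⟩⟩
end

section
/- Let c ∈ ℂ with Re(c) > 0 and Im(c) > 0, and let A, B, α, β be the associated Loewner parameters for the driving function c√(1−t). Then Re(A) > 0, Im(A) > 0 and |A| > 2; Re(B) > 0, Im(B) < 0 and |B| < 2; Re(α) < 1/2 and Im(α) > 0; and Re(β) > 1/2 and Im(β) < 0. -/
set_option maxHeartbeats 1000000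

private lemma aux_sq_lt {a b x y : ℝ} (ha : 0 < a) (hb : 0 < b) (hx : 0 < x)
    (hy : 0 < y) :
    (a - x) / 2 * ((a - x) / 2) + (b - y) / 2 * ((b - y) / 2) <
      (a + x) / 2 * ((a + x) / 2) + (b + y) / 2 * ((b + y) / 2) := by
  nlinarith [mul_pos ha hx, mul_pos hb hy]

theorem loewner_parameters_location_strict
    (c A B α β : ℂ) (hcre : 0 < c.re) (hcim : 0 < c.im)
    (hA : A = (c + (c ^ 2 - 16) ^ ((1 : ℂ) / 2)) / 2)
    (hB : B = (c - (c ^ 2 - 16) ^ ((1 : ℂ) / 2)) / 2)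
    (hα : α = (1 - c / (c ^ 2 - 16) ^ ((1 : ℂ) / 2)) / 2)
    (hβ : β = (1 + c / (c ^ 2 - 16) ^ ((1 : ℂ) / 2)) / 2) :
    (0 < A.re ∧ 0 < A.im ∧ 2 < ‖A‖) ∧
    (0 < B.re ∧ B.im < 0 ∧ ‖B‖ < 2) ∧
    (α.re < 1 / 2 ∧ 0 < α.im) ∧
    (1 / 2 < β.re ∧ β.im < 0) := by
  set s := (c ^ 2 - 16) ^ ((1 : ℂ) / 2) with hs
  have hwim : 0 < (c ^ 2 - 16).im := by
    simp [Complex.sub_im, pow_two, Complex.mul_im]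
    nlinarith
  have hw0 : c ^ 2 - 16 ≠ 0 := fun h => by simp [h] at hwim
  have harg1 : 0 < Complex.arg (c ^ 2 - 16) := by
    rcases lt_or_eq_of_le (Complex.arg_nonneg_iff.mpr hwim.le) with h | h
    · exact h
    · exact absurd (Complex.arg_eq_zero_iff.mp h.symm).2 (ne_of_gt hwim)
  have harg2 : Complex.arg (c ^ 2 - 16) < Real.pi :=
    Complex.arg_lt_pi_iff.mpr (Or.inr (ne_of_gt hwim))
  have hsdef : s = Complex.exp (Complex.log (c ^ 2 - 16) * (1 / 2)) := by
    rw [hs, Complex.cpow_def_of_ne_zero hw0]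
  have hx : 0 < s.re := by
    rw [hsdef]
    simp [Complex.exp_re, Complex.mul_im, Complex.mul_re, Complex.log_re, Complex.log_im]
    refine mul_pos (Real.exp_pos _) (Real.cos_pos_of_mem_Ioo ⟨?_, ?_⟩) <;>
      nlinarith [Real.pi_pos]
  have hy : 0 < s.im := by
    rw [hsdef]
    simp [Complex.exp_im, Complex.mul_im, Complex.mul_re, Complex.log_re, Complex.log_im]
    refine mul_pos (Real.exp_pos _) (Real.sin_pos_of_pos_of_lt_pi ?_ ?_) <;>
      nlinarith [Real.pi_pos]
  have hs0 : s ≠ 0 := fun h => by simp [h] at hx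
  have hs2 : s ^ 2 = c ^ 2 - 16 := by
    rw [hs, one_div]
    exact Complex.cpow_ofNat_inv_pow _ 2
  -- real equations
  have e1 : s.re ^ 2 - s.im ^ 2 = c.re ^ 2 - c.im ^ 2 - 16 := by
    have := congrArg Complex.re hs2
    simp [pow_two, Complex.mul_re, Complex.sub_re] at this
    nlinarith [this]
  have e2 : s.re * s.im = c.re * c.im := by
    have := congrArg Complex.im hs2
    simp [pow_two, Complex.mul_im, Complex.sub_im] at this
    nlinarith [this]
  have hxa : s.re < c.re := by
    by_contra h
    push_neg at h
    have hyb : s.im ≤ c.im := by nlinarith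
    nlinarith
  have hyb : c.im < s.im := by nlinarith
  -- components of A and B
  have hAre : A.re = (c.re + s.re) / 2 := by
    rw [hA]; simp [Complex.div_re, Complex.add_re, Complex.add_im, Complex.normSq_apply]
  have hAim : A.im = (c.im + s.im) / 2 := by
    rw [hA]; simp [Complex.div_im, Complex.add_re, Complex.add_im, Complex.normSq_apply]
  have hBre : B.re = (c.re - s.re) / 2 := by
    rw [hB]; simp [Complex.div_re, Complex.sub_re, Complex.sub_im, Complex.normSq_apply]
  have hBim : B.im = (c.im - s.im) / 2 := by
    rw [hB]; simp [Complex.div_im, Complex.sub_re, Complex.sub_im, Complex.normSq_apply]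
  have hAB : A * B = 4 := by
    rw [hA, hB]
    linear_combination (-(1 : ℂ)/4) * hs2
  have habs : ‖A‖ * ‖B‖ = 4 := by
    rw [← norm_mul, hAB]
    simp
  have hsq : (‖B‖) ^ 2 < (‖A‖) ^ 2 := by
    rw [Complex.sq_norm, Complex.sq_norm, Complex.normSq_apply, Complex.normSq_apply,
      hAre, hAim, hBre, hBim]
    exact aux_sq_lt hcre hcim hx hy
  have habsA : 2 < ‖A‖ := by
    nlinarith [norm_nonneg A, norm_nonneg B, habs, hsq]
  have habsB : ‖B‖ < 2 := by
    nlinarith [norm_nonneg A, norm_nonneg B, habs, habsA]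
  -- c / s
  have hns : 0 < Complex.normSq s := Complex.normSq_pos.mpr hs0
  have htre : 0 < (c / s).re := by
    rw [Complex.div_re]
    have h1 : 0 < c.re * s.re / Complex.normSq s := div_pos (mul_pos hcre hx) hns
    have h2 : 0 < c.im * s.im / Complex.normSq s := div_pos (mul_pos hcim hy) hns
    linarith
  have htim : (c / s).im < 0 := by
    rw [Complex.div_im, div_sub_div_same]
    apply div_neg_of_neg_of_pos _ hns
    nlinarith [mul_lt_mul_of_pos_left hxa hcim, mul_lt_mul_of_pos_right hxa hy, e2]
  have hαre : α.re = (1 - (c / s).re) / 2 := by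
    rw [hα]
    simp [Complex.div_re, Complex.sub_re, Complex.sub_im, Complex.normSq_apply]
  have hαim : α.im = -(c / s).im / 2 := by
    rw [hα]
    simp [Complex.div_im, Complex.sub_re, Complex.sub_im, Complex.normSq_apply]
  have hβre : β.re = (1 + (c / s).re) / 2 := by
    rw [hβ]
    simp [Complex.div_re, Complex.add_re, Complex.add_im, Complex.normSq_apply]
  have hβim : β.im = (c / s).im / 2 := by
    rw [hβ]
    simp [Complex.div_im, Complex.add_re, Complex.add_im, Complex.normSq_apply]
  refine ⟨⟨?_, ?_, habsA⟩, ⟨?_, ?_, habsB⟩, ⟨?_, ?_⟩, ⟨?_, ?_⟩⟩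
  · rw [hAre]; linarith
  · rw [hAim]; linarith
  · rw [hBre]; linarith
  · rw [hBim]; linarith
  · rw [hαre]; linarith
  · rw [hαim]; linarith
  · rw [hβre]; linarith
  · rw [hβim]; linarith
end

section
/- Let c ∈ ℂ, let t ∈ [0,1), and let g : ℝ → ℂ be a function that has derivative 2/(g(t) − c·√(1−t)) at the point t, with g(t) ≠ c·√(1−t). Then the function s ↦ g(s)/√(1−s) has derivative at t equal to (1/(2(1−t)))·(G² − c·G + 4)/(G − c), where G = g(t)/√(1−t). -/
theorem loewner_G_derivative
    (c : ℂ) (t : ℝ) (ht0 : 0 ≤ t) (ht1 : t < 1) (g : ℝ → ℂ)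
    (hne : g t ≠ c * (Real.sqrt (1 - t) : ℂ))
    (hg : HasDerivAt g (2 / (g t - c * (Real.sqrt (1 - t) : ℂ))) t) :
    HasDerivAt (fun s : ℝ => g s / (Real.sqrt (1 - s) : ℂ))
      ((1 / (2 * (1 - (t : ℂ)))) *
        (((g t / (Real.sqrt (1 - t) : ℂ)) ^ 2
            - c * (g t / (Real.sqrt (1 - t) : ℂ)) + 4)
          / (g t / (Real.sqrt (1 - t) : ℂ) - c))) t := by
  have h1t : (0:ℝ) < 1 - t := by linarith
  set r := Real.sqrt (1 - t) with hrdef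
  have hr : 0 < r := Real.sqrt_pos.mpr h1t
  have hrC : ((r:ℂ)) ≠ 0 := by exact_mod_cast hr.ne'
  have hr2 : (r:ℂ)^2 = 1 - (t:ℂ) := by
    have : r^2 = 1 - t := Real.sq_sqrt h1t.le
    exact_mod_cast this
  -- derivative of s ↦ √(1-s) at t
  have hs1 : HasDerivAt (fun s : ℝ => 1 - s) (-1) t := by
    simpa using ((hasDerivAt_id t).const_sub 1)
  have hs2 : HasDerivAt (fun s : ℝ => Real.sqrt (1 - s)) (-(1 / (2 * r))) t := by
    have := hs1.sqrt h1t.ne'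
    simpa [hrdef, neg_div] using this
  have hs3 : HasDerivAt (fun s : ℝ => ((Real.sqrt (1 - s) : ℝ) : ℂ))
      ((-(1 / (2 * r)) : ℝ) : ℂ) t := hs2.ofReal_comp
  have hG : g t / (r:ℂ) - c ≠ 0 := by
    intro h
    apply hne
    field_simp at h
    linear_combination h
  have hd := hg.div hs3 hrC
  refine hd.congr_deriv (Eq.symm ?_)
  have hgc : g t - c * (r:ℂ) ≠ 0 := sub_ne_zero.mpr hne
  rw [← hr2]
  push_cast
  have hD : (g t * (r:ℂ)^5 * 2 - (r:ℂ)^6 * c * 2) ≠ 0 := fun h0 =>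
    (mul_ne_zero (pow_ne_zero 5 hrC) hgc) (by linear_combination h0/2)
  have hinv : (g t * (r:ℂ) ^ 5 * 2 - (r:ℂ) ^ 6 * c * 2) *
      (g t * (r:ℂ) ^ 5 * 2 - (r:ℂ) ^ 6 * c * 2)⁻¹ = 1 := mul_inv_cancel₀ hD
  rw [← hrdef]
  field_simp [hgc, hrC, hD, show g t - (r:ℂ) * c ≠ 0 by rwa [mul_comm]]
  ring
end

section
/- Let c ∈ ℂ with c ≠ 4 and c ≠ −4, and let A, B, α, β be the associated Loewner parameters for the driving function c√(1−t). Then for every s ∈ ℂ with s ≠ 0 and every w ∈ ℂ with w ≠ c·s, w ≠ A·s and w ≠ B·s, one has α·(2/(w − c·s) + A/(2s))/(w − A·s) + β·(2/(w − c·s) + B/(2s))/(w − B·s) = 0. (This identity expresses that, along the Loewner flow driven by c√(1−t), the time derivative of α·log(g_t(z) − A√(1−t)) + β·log(g_t(z) − B√(1−t)) vanishes, with s playing the role of √(1−t) and w the role of g_t(z).) -/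
theorem loewner_log_time_derivative_vanishes
    (c A B α β : ℂ) (hc4 : c ≠ 4) (hc4' : c ≠ -4)
    (hA : A = (c + (c ^ 2 - 16) ^ ((1 : ℂ) / 2)) / 2)
    (hB : B = (c - (c ^ 2 - 16) ^ ((1 : ℂ) / 2)) / 2)
    (hα : α = (1 - c / (c ^ 2 - 16) ^ ((1 : ℂ) / 2)) / 2)
    (hβ : β = (1 + c / (c ^ 2 - 16) ^ ((1 : ℂ) / 2)) / 2) :
    ∀ s : ℂ, s ≠ 0 → ∀ w : ℂ, w ≠ c * s → w ≠ A * s → w ≠ B * s →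
      α * (2 / (w - c * s) + A / (2 * s)) / (w - A * s)
        + β * (2 / (w - c * s) + B / (2 * s)) / (w - B * s) = 0 := by
  set d : ℂ := (c ^ 2 - 16) ^ ((1 : ℂ) / 2) with hd
  have hc16 : c ^ 2 - 16 ≠ 0 := by
    intro h
    have : (c - 4) * (c + 4) = 0 := by linear_combination h
    rcases mul_eq_zero.mp this with h' | h'
    · exact hc4 (by linear_combination h')
    · exact hc4' (by linear_combination h')
  have hd0 : d ≠ 0 := by
    rw [hd]
    simp [Complex.cpow_eq_zero_iff, hc16]
  have hd2 : d ^ 2 = c ^ 2 - 16 := by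
    rw [hd, one_div]
    exact_mod_cast Complex.cpow_nat_inv_pow _ (n := 2) (by norm_num)
  have hab : α + β = 1 := by rw [hα, hβ]; ring
  have hAB : A + B = c := by rw [hA, hB]; ring
  have hABm : A * B = 4 := by rw [hA, hB]; linear_combination (-1/4 : ℂ) * hd2
  have h4 : α * A + β * B = 0 := by
    rw [hα, hβ, hA, hB]
    field_simp
    ring
  have h5 : α * B + β * A = c := by
    rw [hα, hβ, hA, hB]
    field_simp
    ring
  intro s hs w hw1 hw2 hw3
  have h1 : w - c * s ≠ 0 := sub_ne_zero.mpr hw1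
  have h2 : w - A * s ≠ 0 := sub_ne_zero.mpr hw2
  have h3 : w - B * s ≠ 0 := sub_ne_zero.mpr hw3
  have hE : α * (4 * s + A * (w - c * s)) * (w - B * s)
      + β * (4 * s + B * (w - c * s)) * (w - A * s) = 0 := by
    linear_combination (4*s*w + A*B*c*s^2 - A*B*s*w) * hab + (w^2 - c*s*w) * h4
      + (-4*s^2) * h5 + (c*s^2 - s*w) * hABm
  rw [div_add_div _ _ h2 h3, div_eq_zero_iff]
  left
  field_simp
  linear_combination hE
end

section
/- Let c ∈ ℂ with c ≠ 4 and c ≠ −4, let A, B, α, β be the associated Loewner parameters for the driving function c√(1−t), and let 0 < s < 1. Suppose g : ℝ → ℂ satisfies g(0) = z and, for every t ∈ [0,s], g(t) ≠ c·√(1−t), g has derivative 2/(g(t) − c·√(1−t)) at t, and both g(t) − A·√(1−t) and g(t) − B·√(1−t) lie outside the slit (−∞, 0]. Then α·Log(g(s) − A·√(1−s)) + β·Log(g(s) − B·√(1−s)) = α·Log(z − A) + β·Log(z − B), where Log is the principal complex logarithm. -/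
theorem loewner_implicit_solution_sqrt_one_sub_t
    (c A B α β : ℂ) (hc4 : c ≠ 4) (hc4' : c ≠ -4)
    (hA : A = (c + (c ^ 2 - 16) ^ ((1 : ℂ) / 2)) / 2)
    (hB : B = (c - (c ^ 2 - 16) ^ ((1 : ℂ) / 2)) / 2)
    (hα : α = (1 - c / (c ^ 2 - 16) ^ ((1 : ℂ) / 2)) / 2)
    (hβ : β = (1 + c / (c ^ 2 - 16) ^ ((1 : ℂ) / 2)) / 2)
    (s : ℝ) (hs0 : 0 < s) (hs1 : s < 1)
    (g : ℝ → ℂ) (z : ℂ) (hg0 : g 0 = z)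
    (h : ∀ t ∈ Set.Icc (0 : ℝ) s,
      g t ≠ c * (Real.sqrt (1 - t) : ℂ) ∧
      HasDerivAt g (2 / (g t - c * (Real.sqrt (1 - t) : ℂ))) t ∧
      (g t - A * (Real.sqrt (1 - t) : ℂ)) ∈ Complex.slitPlane ∧
      (g t - B * (Real.sqrt (1 - t) : ℂ)) ∈ Complex.slitPlane) :
    α * Complex.log (g s - A * (Real.sqrt (1 - s) : ℂ))
      + β * Complex.log (g s - B * (Real.sqrt (1 - s) : ℂ))
      = α * Complex.log (z - A) + β * Complex.log (z - B) := by
  set d : ℂ := (c ^ 2 - 16) ^ ((1 : ℂ) / 2) with hd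
  have hne : c ^ 2 - 16 ≠ 0 := by
    intro h0
    have : (c - 4) * (c + 4) = 0 := by ring_nf; linear_combination h0
    rcases mul_eq_zero.1 this with h1 | h1
    · exact hc4 (by linear_combination h1)
    · exact hc4' (by linear_combination h1)
  have hd2 : d ^ 2 = c ^ 2 - 16 := by
    rw [hd, show (1 : ℂ) / 2 = ((2 : ℂ))⁻¹ by norm_num]
    exact Complex.cpow_ofNat_inv_pow _ 2
  have hd0 : d ≠ 0 := by
    intro h0
    apply hne; rw [← hd2, h0]; ring
  set F : ℝ → ℂ := fun t => α * Complex.log (g t - A * (Real.sqrt (1 - t) : ℂ))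
      + β * Complex.log (g t - B * (Real.sqrt (1 - t) : ℂ)) with hF
  have key : ∀ t ∈ Set.Icc (0 : ℝ) s, HasDerivAt F 0 t := by
    intro t ht
    obtain ⟨hgc, hder, hsA, hsB⟩ := h t ht
    have ht1 : (0 : ℝ) < 1 - t := by
      have := ht.2; linarith
    have hrpos : 0 < Real.sqrt (1 - t) := Real.sqrt_pos.2 ht1
    have hrC : ((Real.sqrt (1 - t) : ℝ) : ℂ) ≠ 0 := by
      exact_mod_cast hrpos.ne'
    -- derivative of t ↦ (√(1-t) : ℂ)
    have hsqR : HasDerivAt (fun u : ℝ => Real.sqrt (1 - u))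
        (1 / (2 * Real.sqrt (1 - t)) * (-1)) t := by
      have h1 : HasDerivAt (fun u : ℝ => 1 - u) (-1) t := by
        simpa using (hasDerivAt_id' t).const_sub (1 : ℝ)
      exact (Real.hasDerivAt_sqrt ht1.ne').comp t h1
    have hsqC : HasDerivAt (fun u : ℝ => ((Real.sqrt (1 - u) : ℝ) : ℂ))
        (((1 / (2 * Real.sqrt (1 - t)) * (-1) : ℝ) : ℂ)) t := hsqR.ofReal_comp
    set r : ℂ := ((Real.sqrt (1 - t) : ℝ) : ℂ)
    set rd : ℂ := ((1 / (2 * Real.sqrt (1 - t)) * (-1) : ℝ) : ℂ)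
    have hrd : rd = -(1 / (2 * r)) := by
      simp only [rd, r]
      push_cast
      ring
    have hGA : HasDerivAt (fun u => g u - A * ((Real.sqrt (1 - u) : ℝ) : ℂ))
        (2 / (g t - c * r) - A * rd) t := hder.sub ((hsqC.const_mul A))
    have hGB : HasDerivAt (fun u => g u - B * ((Real.sqrt (1 - u) : ℝ) : ℂ))
        (2 / (g t - c * r) - B * rd) t := hder.sub ((hsqC.const_mul B))
    have hLA := (hGA.clog_real hsA).const_mul α
    have hLB := (hGB.clog_real hsB).const_mul β
    have hsum := hLA.add hLB
    have hzero : α * ((2 / (g t - c * r) - A * rd) / (g t - A * r))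
        + β * ((2 / (g t - c * r) - B * rd) / (g t - B * r)) = 0 := by
      have hgc' : g t - c * r ≠ 0 := sub_ne_zero.2 hgc
      have hgA : g t - A * r ≠ 0 := Complex.slitPlane_ne_zero hsA
      have hgB : g t - B * r ≠ 0 := Complex.slitPlane_ne_zero hsB
      rw [hrd]
      have hAB : A * B = 4 := by rw [hA, hB]; linear_combination (-1/4 : ℂ) * hd2
      have hApB : A + B = c := by rw [hA, hB]; ring
      have hab : α * A + β * B = 0 := by rw [hα, hβ, hA, hB]; field_simp; ring
      have e1 : (2 / (g t - c * r) - A * -(1 / (2 * r))) / (g t - A * r)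
          = A / (2 * r * (g t - c * r)) := by
        rw [div_eq_div_iff hgA (by simp [hrC, hgc'])]
        field_simp
        rw [← hApB]
        linear_combination (-r) * hAB
      have e2 : (2 / (g t - c * r) - B * -(1 / (2 * r))) / (g t - B * r)
          = B / (2 * r * (g t - c * r)) := by
        rw [div_eq_div_iff hgB (by simp [hrC, hgc'])]
        field_simp
        rw [← hApB]
        linear_combination (-r) * hAB
      rw [e1, e2, mul_div_assoc', mul_div_assoc', ← add_div, hab, zero_div]
    rw [← hzero]
    exact hsum
  have hcont : ContinuousOn F (Set.Icc 0 s) := fun t ht =>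
    (key t ht).continuousAt.continuousWithinAt
  have hder' : ∀ t ∈ Set.Ico (0 : ℝ) s, HasDerivWithinAt F 0 (Set.Ici t) t := fun t ht =>
    (key t ⟨ht.1, ht.2.le⟩).hasDerivWithinAt
  have hFs : F s = F 0 :=
    constant_of_has_deriv_right_zero hcont hder' s ⟨hs0.le, le_refl s⟩
  have h0 : F 0 = α * Complex.log (z - A) + β * Complex.log (z - B) := by
    simp [F, hg0]
  calc F s = F 0 := hFs
    _ = _ := h0
end

section
/- Let c ∈ ℂ with c ≠ 4 and c ≠ −4, let A, B, α, β be the associated Loewner parameters for the driving function c√(1−t), and let 0 < s < 1. Suppose g : ℝ → ℂ is continuous on [0,s], g(0) = z, g(s) = c·√(1−s), for every t ∈ [0,s) the point g(t) satisfies g(t) ≠ c·√(1−t) and g has derivative 2/(g(t) − c·√(1−t)) at t, and for every t ∈ [0,s] both g(t) − A·√(1−t) and g(t) − B·√(1−t) lie outside the slit (−∞, 0]. Then α·Log(B) + β·Log(A) + Real.log(√(1−s)) = α·Log(z − A) + β·Log(z − B), where Log is the principal complex logarithm and Real.log(√(1−s)) is regarded as a complex number. -/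
theorem loewner_tip_equation_sqrt_one_sub_t
    (c A B α β : ℂ) (hc4 : c ≠ 4) (hc4' : c ≠ -4)
    (hA : A = (c + (c ^ 2 - 16) ^ ((1 : ℂ) / 2)) / 2)
    (hB : B = (c - (c ^ 2 - 16) ^ ((1 : ℂ) / 2)) / 2)
    (hα : α = (1 - c / (c ^ 2 - 16) ^ ((1 : ℂ) / 2)) / 2)
    (hβ : β = (1 + c / (c ^ 2 - 16) ^ ((1 : ℂ) / 2)) / 2)
    (s : ℝ) (hs0 : 0 < s) (hs1 : s < 1)
    (g : ℝ → ℂ) (z : ℂ)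
    (hcont : ContinuousOn g (Set.Icc 0 s))
    (hg0 : g 0 = z) (hgs : g s = c * (Real.sqrt (1 - s) : ℂ))
    (h : ∀ t ∈ Set.Ico (0 : ℝ) s,
      g t ≠ c * (Real.sqrt (1 - t) : ℂ) ∧
      HasDerivAt g (2 / (g t - c * (Real.sqrt (1 - t) : ℂ))) t)
    (hslit : ∀ t ∈ Set.Icc (0 : ℝ) s,
      (g t - A * (Real.sqrt (1 - t) : ℂ)) ∈ Complex.slitPlane ∧
      (g t - B * (Real.sqrt (1 - t) : ℂ)) ∈ Complex.slitPlane) :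
    α * Complex.log B + β * Complex.log A
      + (Real.log (Real.sqrt (1 - s)) : ℂ)
      = α * Complex.log (z - A) + β * Complex.log (z - B) := by
  set d : ℂ := (c ^ 2 - 16) ^ ((1 : ℂ) / 2) with hd
  have hc2 : c ^ 2 - 16 ≠ 0 := by
    intro hh
    rcases mul_eq_zero.mp (show (c - 4) * (c + 4) = 0 by linear_combination hh) with h1 | h1
    · exact hc4 (by linear_combination h1)
    · exact hc4' (by linear_combination h1)
  have hd2 : d ^ 2 = c ^ 2 - 16 := by
    rw [hd, show (1 : ℂ) / 2 = ((2 : ℕ) : ℂ)⁻¹ by norm_num]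
    exact Complex.cpow_nat_inv_pow _ two_ne_zero
  have hdne : d ≠ 0 := by
    intro hh; apply hc2; rw [← hd2, hh]; ring
  have hAB : A * B = 4 := by rw [hA, hB]; linear_combination (-1/4 : ℂ) * hd2
  have hA2 : A ^ 2 = c * A - 4 := by rw [hA]; linear_combination (1/4 : ℂ) * hd2
  have hB2 : B ^ 2 = c * B - 4 := by rw [hB]; linear_combination (1/4 : ℂ) * hd2
  have hαβ : α + β = 1 := by rw [hα, hβ]; ring
  have hkey : α * A + β * B = 0 := by
    rw [hα, hβ, hA, hB]; field_simp; ring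
  have hAne : A ≠ 0 := by intro hh; simp [hh] at hAB
  have hBne : B ≠ 0 := by intro hh; simp [hh] at hAB
  have hcA : c - A = B := by rw [hA, hB]; ring
  have hcB : c - B = A := by rw [hA, hB]; ring
  -- the function
  set F : ℝ → ℂ := fun t => α * Complex.log (g t - A * (Real.sqrt (1 - t) : ℂ))
      + β * Complex.log (g t - B * (Real.sqrt (1 - t) : ℂ)) with hF
  have hrpos : ∀ t ∈ Set.Icc (0 : ℝ) s, 0 < Real.sqrt (1 - t) := fun t ht =>
    Real.sqrt_pos.mpr (by linarith [ht.2])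
  have hrc : ContinuousOn (fun t : ℝ => ((Real.sqrt (1 - t) : ℝ) : ℂ)) (Set.Icc 0 s) := by
    fun_prop
  have hFc : ContinuousOn F (Set.Icc 0 s) := by
    apply ContinuousOn.add
    · exact continuousOn_const.mul
        ((hcont.sub (continuousOn_const.mul hrc)).clog fun t ht => (hslit t ht).1)
    · exact continuousOn_const.mul
        ((hcont.sub (continuousOn_const.mul hrc)).clog fun t ht => (hslit t ht).2)
  have hFd : ∀ t ∈ Set.Ico (0 : ℝ) s, HasDerivAt F 0 t := by
    intro t ht
    obtain ⟨hne, hgd⟩ := h t ht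
    have htIcc : t ∈ Set.Icc 0 s := ⟨ht.1, ht.2.le⟩
    obtain ⟨hsA, hsB⟩ := hslit t htIcc
    set r : ℂ := (Real.sqrt (1 - t) : ℂ) with hrdef
    have hrne : r ≠ 0 := by
      rw [hrdef]; exact_mod_cast (hrpos t htIcc).ne'
    have hxc : g t - c * r ≠ 0 := sub_ne_zero.mpr hne
    have hxA : g t - A * r ≠ 0 := Complex.slitPlane_ne_zero hsA
    have hxB : g t - B * r ≠ 0 := Complex.slitPlane_ne_zero hsB
    have hrderiv : HasDerivAt (fun u : ℝ => ((Real.sqrt (1 - u) : ℝ) : ℂ)) (-(1 / (2 * r))) t := by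
      have h1 : HasDerivAt (fun u : ℝ => 1 - u) (-1) t := by
        simpa using (hasDerivAt_id t).const_sub 1
      have h2 := (Real.hasDerivAt_sqrt (x := 1 - t) (by
        have := hrpos t htIcc
        nlinarith [Real.sq_sqrt (show (0:ℝ) ≤ 1 - t by linarith [ht.2])])).comp t h1
      have h3 := h2.ofReal_comp
      convert h3 using 1
      · rfl
      rw [hrdef]
      push_cast
      ring
    have hdA : HasDerivAt (fun u => g u - A * (Real.sqrt (1 - u) : ℂ))
        (2 / (g t - c * r) - A * (-(1 / (2 * r)))) t := hgd.sub (hrderiv.const_mul A)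
    have hdB : HasDerivAt (fun u => g u - B * (Real.sqrt (1 - u) : ℂ))
        (2 / (g t - c * r) - B * (-(1 / (2 * r)))) t := hgd.sub (hrderiv.const_mul B)
    have hlA := (hdA.clog_real hsA).const_mul α
    have hlB := (hdB.clog_real hsB).const_mul β
    have hsum := hlA.add hlB
    have heq : α * ((2 / (g t - c * r) - A * (-(1 / (2 * r)))) / (g t - A * r))
        + β * ((2 / (g t - c * r) - B * (-(1 / (2 * r)))) / (g t - B * r)) = 0 := by
      have eA : (2 / (g t - c * r) - A * (-(1 / (2 * r)))) / (g t - A * r)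
          = A / (2 * r * (g t - c * r)) := by
        rw [div_eq_div_iff hxA (by exact mul_ne_zero (mul_ne_zero two_ne_zero hrne) hxc)]
        field_simp
        linear_combination r * hA2
      have eB : (2 / (g t - c * r) - B * (-(1 / (2 * r)))) / (g t - B * r)
          = B / (2 * r * (g t - c * r)) := by
        rw [div_eq_div_iff hxB (by exact mul_ne_zero (mul_ne_zero two_ne_zero hrne) hxc)]
        field_simp
        linear_combination r * hB2
      rw [eA, eB, mul_div_assoc', mul_div_assoc', ← add_div, hkey, zero_div]
    rw [← heq]
    exact hsum
  have hconst := constant_of_has_deriv_right_zero hFc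
    (fun t ht => (hFd t ht).hasDerivWithinAt)
  have hFs := hconst s ⟨hs0.le, le_refl s⟩
  -- compute F 0
  have hF0 : F 0 = α * Complex.log (z - A) + β * Complex.log (z - B) := by
    simp [hF, hg0, Real.sqrt_one]
  -- compute F s
  have hrs : (0 : ℝ) < Real.sqrt (1 - s) := hrpos s ⟨hs0.le, le_refl s⟩
  have hFsval : F s = α * ((Real.log (Real.sqrt (1 - s)) : ℂ) + Complex.log B)
      + β * ((Real.log (Real.sqrt (1 - s)) : ℂ) + Complex.log A) := by
    rw [hF]
    simp only [hgs]
    have e1 : c * (Real.sqrt (1 - s) : ℂ) - A * (Real.sqrt (1 - s) : ℂ)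
        = B * (Real.sqrt (1 - s) : ℂ) := by rw [← hcA]; ring
    have e2 : c * (Real.sqrt (1 - s) : ℂ) - B * (Real.sqrt (1 - s) : ℂ)
        = A * (Real.sqrt (1 - s) : ℂ) := by rw [← hcB]; ring
    rw [e1, e2, Complex.log_mul_ofReal _ hrs _ hBne, Complex.log_mul_ofReal _ hrs _ hAne]
  rw [hF0, hFsval] at hFs
  linear_combination hFs - (Real.log (Real.sqrt (1 - s)) : ℂ) * hαβ
end

section
/- Let c ∈ ℂ with Re(c) ≥ 0 and Im(c) > 0, and let λ(t) = c·√(1−t). Let 0 ≤ τ < u ≤ 1, and suppose g : ℝ → ℂ satisfies, for every t ∈ [τ, u), g(t) ≠ λ(t) and g has derivative 2/(g(t) − λ(t)) at t. If Im(g(τ)) ≥ Im(λ(τ)), then Im(g(t)) ≥ Im(λ(t)) for all t ∈ [τ, u). -/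
open Set

theorem loewner_lower_halfplane_preserved
    (c : ℂ) (hcre : 0 ≤ c.re) (hcim : 0 < c.im)
    (τ u : ℝ) (hτ : 0 ≤ τ) (hτu : τ < u) (hu : u ≤ 1)
    (g : ℝ → ℂ)
    (h : ∀ t ∈ Set.Ico τ u,
      g t ≠ c * (Real.sqrt (1 - t) : ℂ) ∧
      HasDerivAt g (2 / (g t - c * (Real.sqrt (1 - t) : ℂ))) t)
    (hinit : (c * (Real.sqrt (1 - τ) : ℂ)).im ≤ (g τ).im) :
    ∀ t ∈ Set.Ico τ u, (c * (Real.sqrt (1 - t) : ℂ)).im ≤ (g t).im := by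
  intro t ht
  obtain ⟨htτ, htu⟩ := ht
  -- λ(x).im = c.im * √(1-x)
  have him : ∀ x : ℝ, (c * (Real.sqrt (1 - x) : ℂ)).im = c.im * Real.sqrt (1 - x) := by
    intro x; simp [Complex.mul_im]
  -- apply fencing lemma on [τ, t]
  have key : ∀ ⦃x⦄, x ∈ Icc τ t →
      (fun x => c.im * Real.sqrt (1 - x)) x ≤ (fun x => (g x).im) x := by
    refine image_le_of_deriv_right_lt_deriv_boundary'
      (f := fun x => c.im * Real.sqrt (1 - x))
      (f' := fun x => c.im * (-1 / (2 * Real.sqrt (1 - x))))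
      (B := fun x => (g x).im)
      (B' := fun x => (2 / (g x - c * (Real.sqrt (1 - x) : ℂ))).im)
      (a := τ) (b := t) ?_ ?_ ?_ ?_ ?_ ?_
    · -- continuity of f
      exact (Continuous.mul continuous_const
        ((Real.continuous_sqrt).comp (continuous_const.sub continuous_id))).continuousOn
    · -- derivative of f
      intro x hx
      have hx1 : (0:ℝ) < 1 - x := by
        have : x < 1 := lt_of_lt_of_le (lt_of_lt_of_le hx.2 htu.le) hu
        linarith
      have h1 : HasDerivAt (fun x : ℝ => Real.sqrt (1 - x)) (1 / (2 * Real.sqrt (1 - x)) * (-1)) x := by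
        have := (Real.hasDerivAt_sqrt (x := 1 - x) (ne_of_gt hx1)).comp x
          ((hasDerivAt_const x (1:ℝ)).sub (hasDerivAt_id x))
        simpa [Function.comp_def] using this
      have h2 := h1.const_mul c.im
      have : c.im * (1 / (2 * Real.sqrt (1 - x)) * (-1)) = c.im * (-1 / (2 * Real.sqrt (1 - x))) := by
        ring
      rw [this] at h2
      exact h2.hasDerivWithinAt
    · -- initial inequality
      simpa [him τ] using hinit
    · -- continuity of B
      intro x hx
      have hxu : x ∈ Ico τ u := ⟨hx.1, lt_of_le_of_lt hx.2 htu⟩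
      exact (Complex.continuous_im.continuousAt.comp (h x hxu).2.continuousAt).continuousWithinAt
    · -- derivative of B
      intro x hx
      have hxu : x ∈ Ico τ u := ⟨hx.1, lt_of_le_of_lt hx.2.le htu⟩
      have := (Complex.imCLM.hasFDerivAt.comp_hasDerivAt x (h x hxu).2)
      exact this.hasDerivWithinAt
    · -- the bound at touching points
      intro x hx heq
      have hx1 : (0:ℝ) < 1 - x := by
        have : x < 1 := lt_of_lt_of_le (lt_of_lt_of_le hx.2 htu.le) hu
        linarith
      have hxu : x ∈ Ico τ u := ⟨hx.1, lt_of_le_of_lt hx.2.le htu⟩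
      have hne := (h x hxu).1
      set z : ℂ := g x - c * (Real.sqrt (1 - x) : ℂ) with hz
      have hzne : z ≠ 0 := sub_ne_zero.mpr hne
      have hzim : z.im = 0 := by
        simp only [hz, Complex.sub_im, Complex.mul_im, Complex.ofReal_re, Complex.ofReal_im]
        simp only [mul_zero, add_zero] at *
        linarith [heq]
      have hB0 : (2 / z).im = 0 := by
        rw [Complex.div_im]
        simp [hzim]
      show c.im * (-1 / (2 * Real.sqrt (1 - x))) < (2 / z).im
      rw [hB0]
      have : c.im * (-1 / (2 * Real.sqrt (1 - x))) < 0 := by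
        apply mul_neg_of_pos_of_neg hcim
        apply div_neg_of_neg_of_pos (by norm_num)
        positivity
      exact this
  have := key (x := t) ⟨htτ, le_refl t⟩
  simpa [him t] using this
end

section
/- Let λ : ℝ → ℂ be any driving function, let u > 0, and suppose g : ℝ → ℂ satisfies g(0) = w and, for every t ∈ [0, u), g(t) ≠ λ(t) and g has derivative 2/(g(t) − λ(t)) at t. If Re(w) > Re(λ(t)) for all t ∈ [0, u), then Re(g(t)) ≥ Re(w) for all t ∈ [0, u); and if Re(w) < Re(λ(t)) for all t ∈ [0, u), then Re(g(t)) ≤ Re(w) for all t ∈ [0, u). (Consequently any point starting strictly outside the closed vertical strip spanned by the values of the driving function remains outside it, so the left Loewner hull is contained in that vertical strip.) -/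
open Set Filter

lemma stays_ge_aux (f f' : ℝ → ℝ) (u c : ℝ)
    (hf0 : c ≤ f 0)
    (hd : ∀ t ∈ Set.Ico (0:ℝ) u, HasDerivAt f (f' t) t)
    (hpos : ∀ t ∈ Set.Ico (0:ℝ) u, c ≤ f t → 0 < f' t) :
    ∀ t ∈ Set.Ico (0:ℝ) u, c ≤ f t := by
  rintro t₀ ⟨ht₀0, ht₀u⟩
  by_contra hlt
  push_neg at hlt
  have ht₀pos : 0 < t₀ := by
    rcases lt_or_eq_of_le ht₀0 with h' | h'
    · exact h'
    · exact absurd (h' ▸ hf0) (not_le.mpr hlt)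
  have hsub : Set.Icc 0 t₀ ⊆ Set.Ico 0 u := fun x hx => ⟨hx.1, lt_of_le_of_lt hx.2 ht₀u⟩
  have hcont : ContinuousOn f (Set.Icc 0 t₀) := fun x hx =>
    ((hd x (hsub hx)).continuousAt).continuousWithinAt
  set S : Set ℝ := Set.Icc 0 t₀ ∩ f ⁻¹' Set.Ici c with hS
  have hSclosed : IsClosed S := hcont.preimage_isClosed_of_isClosed isClosed_Icc isClosed_Ici
  have hSne : S.Nonempty := ⟨0, ⟨le_refl 0, le_of_lt ht₀pos⟩, hf0⟩
  have hSbdd : BddAbove S := ⟨t₀, fun x hx => hx.1.2⟩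
  set s := sSup S with hs
  have hsS : s ∈ S := hSclosed.csSup_mem hSne hSbdd
  have hst₀ : s ≤ t₀ := hsS.1.2
  have hsne : s ≠ t₀ := by
    intro h'
    exact absurd (h' ▸ hsS.2) (not_le.mpr hlt)
  have hslt : s < t₀ := lt_of_le_of_ne hst₀ hsne
  have hsIco : s ∈ Set.Ico 0 u := ⟨hsS.1.1, lt_trans hslt ht₀u⟩
  have hd' : 0 < f' s := hpos s hsIco hsS.2
  -- slope tends to f' s from the right
  have hslope : Tendsto (slope f s) (nhdsWithin s {s}ᶜ) (nhds (f' s)) :=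
    hasDerivAt_iff_tendsto_slope.mp (hd s hsIco)
  have hslope' : Tendsto (slope f s) (nhdsWithin s (Set.Ioi s)) (nhds (f' s)) :=
    hslope.mono_left (nhdsWithin_mono s (fun x hx => ne_of_gt hx))
  have hev : ∀ᶠ x in nhdsWithin s (Set.Ioi s), 0 < slope f s x :=
    hslope'.eventually (eventually_gt_nhds hd')
  have hev2 : Set.Ioo s t₀ ∈ nhdsWithin s (Set.Ioi s) := Ioo_mem_nhdsGT_of_mem ⟨le_refl s, hslt⟩
  rcases (hev.and hev2).exists with ⟨x, hx1, hx2⟩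
  have hxs : s < x := hx2.1
  have hfx : c ≤ f x := by
    have : 0 < (f x - f s) / (x - s) := by
      simpa [slope, div_eq_inv_mul] using hx1
    have h2 : 0 < f x - f s := by
      have := mul_pos this (sub_pos.mpr hxs)
      rwa [div_mul_cancel₀] at this
      exact ne_of_gt (sub_pos.mpr hxs)
    have hsc : c ≤ f s := hsS.2
    linarith
  have hxS : x ∈ S := ⟨⟨le_trans hsS.1.1 (le_of_lt hxs), le_of_lt hx2.2⟩, hfx⟩
  exact absurd (le_csSup hSbdd hxS) (not_le.mpr hxs)

theorem loewner_hull_in_vertical_strip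
    (lam : ℝ → ℂ) (u : ℝ) (hu : 0 < u) (g : ℝ → ℂ) (w : ℂ) (hg0 : g 0 = w)
    (h : ∀ t ∈ Set.Ico (0 : ℝ) u,
      g t ≠ lam t ∧ HasDerivAt g (2 / (g t - lam t)) t) :
    ((∀ t ∈ Set.Ico (0 : ℝ) u, (lam t).re < w.re) →
        ∀ t ∈ Set.Ico (0 : ℝ) u, w.re ≤ (g t).re) ∧
    ((∀ t ∈ Set.Ico (0 : ℝ) u, w.re < (lam t).re) →
        ∀ t ∈ Set.Ico (0 : ℝ) u, (g t).re ≤ w.re) := by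
  have hdre : ∀ t ∈ Set.Ico (0:ℝ) u,
      HasDerivAt (fun t => (g t).re) ((2 / (g t - lam t)).re) t := by
    intro t ht
    exact (Complex.reCLM.hasFDerivAt.comp_hasDerivAt t (h t ht).2)
  have hre : ∀ t ∈ Set.Ico (0:ℝ) u,
      (2 / (g t - lam t)).re = 2 * ((g t).re - (lam t).re) / Complex.normSq (g t - lam t) := by
    intro t ht
    rw [Complex.div_re]
    simp [Complex.sub_re]
    try ring
  have hnsq : ∀ t ∈ Set.Ico (0:ℝ) u, 0 < Complex.normSq (g t - lam t) := by
    intro t ht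
    exact Complex.normSq_pos.mpr (sub_ne_zero.mpr (h t ht).1)
  constructor
  · intro hlam
    exact stays_ge_aux (fun t => (g t).re) (fun t => (2 / (g t - lam t)).re) u w.re
      (by rw [hg0]) hdre
      (fun t ht hge => by
        rw [hre t ht]
        have h1 := hlam t ht
        have h2 := hnsq t ht
        apply div_pos _ h2
        linarith)
  · intro hlam
    have := stays_ge_aux (fun t => -(g t).re) (fun t => -(2 / (g t - lam t)).re) u (-w.re)
      (by rw [hg0]) (fun t ht => (hdre t ht).neg)
      (fun t ht hge => by
        rw [hre t ht]
        have h1 := hlam t ht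
        have h2 := hnsq t ht
        have h3 : (g t).re ≤ w.re := by linarith [neg_le_neg_iff.mp hge]
        have : 2 * ((g t).re - (lam t).re) / Complex.normSq (g t - lam t) < 0 := by
          apply div_neg_of_neg_of_pos _ h2
          linarith
        linarith)
    intro t ht
    have h4 := this t ht
    linarith
end

section
/- Let c ∈ ℂ with c ≠ 4 and c ≠ −4, and let A, B be the associated Loewner parameters for the driving function λ(t) = c·√(1−t). Then for every t ∈ [0,1): the function w_A(t) = A·√(1−t) satisfies w_A(t) ≠ λ(t) and has derivative 2/(w_A(t) − λ(t)) at t, and likewise w_B(t) = B·√(1−t) satisfies w_B(t) ≠ λ(t) and has derivative 2/(w_B(t) − λ(t)) at t; moreover w_A(1) = w_B(1) = λ(1) = 0. (That is, the Loewner flows started from A and from B are w_A and w_B, and the points A and B are captured exactly at time 1, so A, B ∈ L₁.) -/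
theorem loewner_flow_of_A_and_B
    (c A B : ℂ) (hc4 : c ≠ 4) (hc4' : c ≠ -4)
    (hA : A = (c + (c ^ 2 - 16) ^ ((1 : ℂ) / 2)) / 2)
    (hB : B = (c - (c ^ 2 - 16) ^ ((1 : ℂ) / 2)) / 2) :
    (∀ t ∈ Set.Ico (0 : ℝ) 1,
      A * (Real.sqrt (1 - t) : ℂ) ≠ c * (Real.sqrt (1 - t) : ℂ) ∧
      HasDerivAt (fun t : ℝ => A * (Real.sqrt (1 - t) : ℂ))
        (2 / (A * (Real.sqrt (1 - t) : ℂ) - c * (Real.sqrt (1 - t) : ℂ))) t ∧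
      B * (Real.sqrt (1 - t) : ℂ) ≠ c * (Real.sqrt (1 - t) : ℂ) ∧
      HasDerivAt (fun t : ℝ => B * (Real.sqrt (1 - t) : ℂ))
        (2 / (B * (Real.sqrt (1 - t) : ℂ) - c * (Real.sqrt (1 - t) : ℂ))) t) ∧
    A * (Real.sqrt (1 - 1) : ℂ) = 0 ∧
    B * (Real.sqrt (1 - 1) : ℂ) = 0 ∧
    c * (Real.sqrt (1 - 1) : ℂ) = 0 := by
  set s : ℂ := (c ^ 2 - 16) ^ ((1 : ℂ) / 2) with hs
  have hw : c ^ 2 - 16 ≠ 0 := by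
    intro h
    have : (c - 4) * (c + 4) = 0 := by linear_combination h
    rcases mul_eq_zero.1 this with h1 | h1
    · exact hc4 (by linear_combination h1)
    · exact hc4' (by linear_combination h1)
  have hs2 : s * s = c ^ 2 - 16 := by
    rw [hs, ← Complex.cpow_add _ _ hw]
    norm_num
  have hA2 : A ^ 2 - c * A + 4 = 0 := by
    rw [hA]; linear_combination (1 / 4 : ℂ) * hs2
  have hB2 : B ^ 2 - c * B + 4 = 0 := by
    rw [hB]; linear_combination (1 / 4 : ℂ) * hs2
  have hAc : A ≠ c := by
    intro h
    have hsc : s = c := by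
      have := hA.symm.trans h
      linear_combination 2 * this
    rw [hsc] at hs2
    have : (16 : ℂ) = 0 := by linear_combination hs2
    norm_num at this
  have hBc : B ≠ c := by
    intro h
    have hsc : s = -c := by
      have := hB.symm.trans h
      linear_combination -2 * this
    rw [hsc] at hs2
    have : (16 : ℂ) = 0 := by linear_combination hs2
    norm_num at this
  refine ⟨?_, by norm_num, by norm_num, by norm_num⟩
  intro t ht
  obtain ⟨ht0, ht1⟩ := ht
  have hpos : (0 : ℝ) < 1 - t := by linarith
  have hsqpos : 0 < Real.sqrt (1 - t) := Real.sqrt_pos.2 hpos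
  have hsqne : ((Real.sqrt (1 - t) : ℝ) : ℂ) ≠ 0 := by
    exact_mod_cast hsqpos.ne'
  have hu : HasDerivAt (fun t : ℝ => 1 - t) (-1) t := by
    simpa using (hasDerivAt_id t).const_sub 1
  have hsqrt : HasDerivAt (fun t : ℝ => Real.sqrt (1 - t))
      (1 / (2 * Real.sqrt (1 - t)) * (-1)) t :=
    (Real.hasDerivAt_sqrt hpos.ne').comp t hu
  have hsqrtC : HasDerivAt (fun t : ℝ => ((Real.sqrt (1 - t) : ℝ) : ℂ))
      ((1 / (2 * Real.sqrt (1 - t)) * (-1) : ℝ) : ℂ) t := hsqrt.ofReal_comp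
  have key : ∀ z : ℂ, z ^ 2 - c * z + 4 = 0 → z ≠ c →
      z * (Real.sqrt (1 - t) : ℂ) ≠ c * (Real.sqrt (1 - t) : ℂ) ∧
      HasDerivAt (fun t : ℝ => z * (Real.sqrt (1 - t) : ℂ))
        (2 / (z * (Real.sqrt (1 - t) : ℂ) - c * (Real.sqrt (1 - t) : ℂ))) t := by
    intro z hz2 hzc
    have hzc' : z - c ≠ 0 := sub_ne_zero.2 hzc
    constructor
    · intro h
      exact hzc (mul_right_cancel₀ hsqne h)
    · have := hsqrtC.const_mul z
      refine this.congr_deriv ?_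
      symm
      push_cast
      rw [show z * (Real.sqrt (1 - t) : ℂ) - c * (Real.sqrt (1 - t) : ℂ)
            = (z - c) * (Real.sqrt (1 - t) : ℂ) by ring,
        div_eq_iff (mul_ne_zero hzc' hsqne)]
      field_simp
      linear_combination hz2
    
  exact ⟨(key A hA2 hAc).1, (key A hA2 hAc).2, (key B hB2 hBc).1, (key B hB2 hBc).2⟩
end

section
/- Let c ∈ ℂ, let τ ≥ 0 and t ≥ 0 with τ + t > 0, and let g : ℝ → ℂ be a function that has derivative 2/(g(t) − c·√(τ+t)) at the point t, with g(t) ≠ c·√(τ+t). Then the function s ↦ g(s)/√(τ+s) has derivative at t equal to −(1/(2(τ+t)))·(W² − c·W − 4)/(W − c), where W = g(t)/√(τ+t). -/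
theorem loewner_W_derivative
    (c : ℂ) (τ t : ℝ) (hτ : 0 ≤ τ) (ht : 0 ≤ t) (hpos : 0 < τ + t)
    (g : ℝ → ℂ)
    (hne : g t ≠ c * (Real.sqrt (τ + t) : ℂ))
    (hg : HasDerivAt g (2 / (g t - c * (Real.sqrt (τ + t) : ℂ))) t) :
    HasDerivAt (fun s : ℝ => g s / (Real.sqrt (τ + s) : ℂ))
      (-(1 / (2 * ((τ : ℂ) + t))) *
        (((g t / (Real.sqrt (τ + t) : ℂ)) ^ 2
            - c * (g t / (Real.sqrt (τ + t) : ℂ)) - 4)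
          / (g t / (Real.sqrt (τ + t) : ℂ) - c))) t := by
  set r : ℝ := Real.sqrt (τ + t) with hr
  have hrpos : 0 < r := Real.sqrt_pos.2 hpos
  have hrne : (r : ℂ) ≠ 0 := by exact_mod_cast hrpos.ne'
  have hsq : (r : ℂ) ^ 2 = (τ : ℂ) + t := by
    have : r ^ 2 = τ + t := Real.sq_sqrt hpos.le
    exact_mod_cast this
  have hsqrt : HasDerivAt (fun s : ℝ => Real.sqrt (τ + s)) (1 / (2 * r)) t := by
    have h1 : HasDerivAt (fun s : ℝ => τ + s) 1 t := by
      simpa using (hasDerivAt_id t).const_add τ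
    have h2 := (Real.hasDerivAt_sqrt hpos.ne').comp t h1
    exact h2.congr_deriv (by simp [hr])
  have hsqrtC : HasDerivAt (fun s : ℝ => (Real.sqrt (τ + s) : ℂ)) ((1 / (2 * r) : ℝ) : ℂ) t :=
    hsqrt.ofReal_comp
  have hden : (Real.sqrt (τ + t) : ℂ) ≠ 0 := hrne
  have hdiff : g t - c * (r : ℂ) ≠ 0 := sub_ne_zero.2 hne
  have hWc : g t / (r : ℂ) - c ≠ 0 := by
    intro h
    apply hdiff
    have := sub_eq_zero.1 h
    field_simp at this
    rw [this]; ring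
  have := hg.div hsqrtC hden
  convert this using 1
  · rfl
  · rfl
  have hta : ((τ : ℂ) + t) ≠ 0 := by
    rw [← hsq]; exact pow_ne_zero _ hrne
  rw [← hsq]
  push_cast
  field_simp [hdiff]
  rw [← hr]
  have h1 : g t - (r:ℂ) * c ≠ 0 := by rw [mul_comm]; exact hdiff
  field_simp
  ring
end

section
/- Let c ∈ ℂ with c ≠ 4i and c ≠ −4i, let D, E, δ, ε be the associated Loewner parameters for the driving function c√(τ+t), let τ > 0 and s > 0. Suppose g : ℝ → ℂ satisfies g(0) = z and, for every t ∈ [0,s], g(t) ≠ c·√(τ+t), g has derivative 2/(g(t) − c·√(τ+t)) at t, and both g(t) − D·√(τ+t) and g(t) − E·√(τ+t) lie outside the slit (−∞, 0]. Then δ·Log(g(s) − D·√(τ+s)) + ε·Log(g(s) − E·√(τ+s)) = δ·Log(z − D·√τ) + ε·Log(z − E·√τ), where Log is the principal complex logarithm. -/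
/-- The key algebraic identity behind the Loewner implicit solution. -/
lemma loewner_key_identity (δ ε D E c G W : ℂ)
    (hsum : δ + ε = 1) (h0 : δ * D + ε * E = 0) (hc : δ * E + ε * D = c)
    (hDE : D * E = -4) (hW : W ≠ 0) (h1 : G - c * W ≠ 0)
    (h2 : G - D * W ≠ 0) (h3 : G - E * W ≠ 0) :
    δ * ((2 / (G - c * W) - D * (1 / (2 * W))) / (G - D * W))
      + ε * ((2 / (G - c * W) - E * (1 / (2 * W))) / (G - E * W)) = 0 := by
  have key : δ * (2 * (2*W) - D * (G - c*W)) * (G - E*W)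
      + ε * (2 * (2*W) - E * (G - c*W)) * (G - D*W) = 0 := by
    linear_combination (4 * c * W ^ 2) * hsum
      + ((δ + ε) * (W * G - c * W ^ 2)) * hDE
      + (c * W * G - G ^ 2) * h0
      + ((-4 : ℂ) * W ^ 2) * hc
  have h2W : (2 * W : ℂ) ≠ 0 := mul_ne_zero two_ne_zero hW
  have hM0 : (G - c*W) * (2*W) ≠ 0 := mul_ne_zero h1 h2W
  have e1 : 2 / (G - c*W) - D * (1 / (2*W))
      = (2 * (2*W) - D * (G - c*W)) / ((G - c*W) * (2*W)) := by
    field_simp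
  have e2 : 2 / (G - c*W) - E * (1 / (2*W))
      = (2 * (2*W) - E * (G - c*W)) / ((G - c*W) * (2*W)) := by
    field_simp
  rw [e1, e2, div_div, div_div, ← mul_div_assoc, ← mul_div_assoc,
    div_add_div _ _ (mul_ne_zero hM0 h2) (mul_ne_zero hM0 h3), div_eq_zero_iff]
  left
  linear_combination ((G - c*W) * (2*W)) * key

theorem loewner_implicit_solution_sqrt_tau_add_t
    (c D E δ ε : ℂ) (hc4 : c ≠ 4 * Complex.I) (hc4' : c ≠ -4 * Complex.I)
    (hD : D = (c + (c ^ 2 + 16) ^ ((1 : ℂ) / 2)) / 2)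
    (hE : E = (c - (c ^ 2 + 16) ^ ((1 : ℂ) / 2)) / 2)
    (hδ : δ = (1 - c / (c ^ 2 + 16) ^ ((1 : ℂ) / 2)) / 2)
    (hε : ε = (1 + c / (c ^ 2 + 16) ^ ((1 : ℂ) / 2)) / 2)
    (τ s : ℝ) (hτ : 0 < τ) (hs : 0 < s)
    (g : ℝ → ℂ) (z : ℂ) (hg0 : g 0 = z)
    (h : ∀ t ∈ Set.Icc (0 : ℝ) s,
      g t ≠ c * (Real.sqrt (τ + t) : ℂ) ∧
      HasDerivAt g (2 / (g t - c * (Real.sqrt (τ + t) : ℂ))) t ∧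
      (g t - D * (Real.sqrt (τ + t) : ℂ)) ∈ Complex.slitPlane ∧
      (g t - E * (Real.sqrt (τ + t) : ℂ)) ∈ Complex.slitPlane) :
    δ * Complex.log (g s - D * (Real.sqrt (τ + s) : ℂ))
      + ε * Complex.log (g s - E * (Real.sqrt (τ + s) : ℂ))
      = δ * Complex.log (z - D * (Real.sqrt τ : ℂ))
        + ε * Complex.log (z - E * (Real.sqrt τ : ℂ)) := by
  set q : ℂ := (c ^ 2 + 16) ^ ((1 : ℂ) / 2) with hq
  -- basic nonvanishing facts
  have hbase : (c ^ 2 + 16 : ℂ) ≠ 0 := by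
    have hfact : (c ^ 2 + 16 : ℂ) = (c - 4 * Complex.I) * (c + 4 * Complex.I) := by
      have hI : Complex.I ^ 2 = -1 := Complex.I_sq
      linear_combination (16 : ℂ) * hI
    rw [hfact]
    refine mul_ne_zero (sub_ne_zero.2 hc4) ?_
    intro h0
    exact hc4' (by linear_combination h0)
  have hq2 : q ^ 2 = c ^ 2 + 16 := by
    rw [hq, sq, ← Complex.cpow_add _ _ hbase]
    norm_num
  have hqne : q ≠ 0 := by
    intro h0
    apply hbase
    rw [← hq2, h0]
    ring
  -- the Loewner parameter relations
  have hsum : δ + ε = 1 := by rw [hδ, hε]; ring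
  have h0R : δ * D + ε * E = 0 := by
    rw [hδ, hε, hD, hE]; field_simp; ring
  have hcR : δ * E + ε * D = c := by
    rw [hδ, hε, hD, hE]; field_simp; ring
  have hDER : D * E = -4 := by
    rw [hD, hE]
    linear_combination (-(1 : ℂ)/4) * hq2
  -- the conserved quantity
  set F : ℝ → ℂ := fun t =>
    δ * Complex.log (g t - D * (Real.sqrt (τ + t) : ℂ))
      + ε * Complex.log (g t - E * (Real.sqrt (τ + t) : ℂ)) with hF
  have hderiv : ∀ t ∈ Set.Icc (0 : ℝ) s, HasDerivAt F 0 t := by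
    intro t ht
    obtain ⟨hne, hg', hslitD, hslitE⟩ := h t ht
    have hpos : 0 < τ + t := by
      have := ht.1; linarith
    have hWpos : 0 < Real.sqrt (τ + t) := Real.sqrt_pos.mpr hpos
    have hWne : ((Real.sqrt (τ + t) : ℝ) : ℂ) ≠ 0 :=
      Complex.ofReal_ne_zero.mpr (ne_of_gt hWpos)
    -- derivative of the square root term
    have hWr : HasDerivAt (fun t : ℝ => Real.sqrt (τ + t))
        (1 / (2 * Real.sqrt (τ + t))) t := by
      have h1 : HasDerivAt (fun t : ℝ => τ + t) 1 t := (hasDerivAt_id t).const_add τ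
      simpa using h1.sqrt (ne_of_gt hpos)
    have hWc : HasDerivAt (fun t : ℝ => ((Real.sqrt (τ + t) : ℝ) : ℂ))
        (1 / (2 * ((Real.sqrt (τ + t) : ℝ) : ℂ))) t := by
      have := hWr.ofReal_comp
      convert this using 1
      push_cast
      ring
    have huD : HasDerivAt (fun t : ℝ => g t - D * ((Real.sqrt (τ + t) : ℝ) : ℂ))
        (2 / (g t - c * ((Real.sqrt (τ + t) : ℝ) : ℂ))
          - D * (1 / (2 * ((Real.sqrt (τ + t) : ℝ) : ℂ)))) t :=
      hg'.sub (hWc.const_mul D)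
    have huE : HasDerivAt (fun t : ℝ => g t - E * ((Real.sqrt (τ + t) : ℝ) : ℂ))
        (2 / (g t - c * ((Real.sqrt (τ + t) : ℝ) : ℂ))
          - E * (1 / (2 * ((Real.sqrt (τ + t) : ℝ) : ℂ)))) t :=
      hg'.sub (hWc.const_mul E)
    have hlogD := (huD.clog_real hslitD).const_mul δ
    have hlogE := (huE.clog_real hslitE).const_mul ε
    have HF := hlogD.add hlogE
    have keyEq := loewner_key_identity δ ε D E c (g t) ((Real.sqrt (τ + t) : ℝ) : ℂ)
      hsum h0R hcR hDER hWne (sub_ne_zero.mpr hne)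
      (Complex.slitPlane_ne_zero hslitD) (Complex.slitPlane_ne_zero hslitE)
    rw [hF]
    exact keyEq ▸ HF
  have hcont : ContinuousOn F (Set.Icc 0 s) := fun t ht =>
    (hderiv t ht).continuousAt.continuousWithinAt
  have hconst := constant_of_has_deriv_right_zero hcont
    (fun t ht => (hderiv t (Set.Ico_subset_Icc_self ht)).hasDerivWithinAt)
  have hFs : F s = F 0 := hconst s ⟨hs.le, le_rfl⟩
  have hF0 : F 0 = δ * Complex.log (z - D * (Real.sqrt τ : ℂ))
      + ε * Complex.log (z - E * (Real.sqrt τ : ℂ)) := by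
    rw [hF]
    simp [hg0]
  calc δ * Complex.log (g s - D * (Real.sqrt (τ + s) : ℂ))
      + ε * Complex.log (g s - E * (Real.sqrt (τ + s) : ℂ)) = F s := by rw [hF]
    _ = F 0 := hFs
    _ = _ := hF0
end

section
/- Let c ∈ ℂ with c ≠ 4i and c ≠ −4i, let D, E, δ, ε be the associated Loewner parameters for the driving function c√(τ+t), let τ > 0 and s > 0. Suppose g : ℝ → ℂ is continuous on [0,s], g(0) = z, g(s) = c·√(τ+s), for every t ∈ [0,s) the point g(t) satisfies g(t) ≠ c·√(τ+t) and g has derivative 2/(g(t) − c·√(τ+t)) at t, and for every t ∈ [0,s] both g(t) − D·√(τ+t) and g(t) − E·√(τ+t) lie outside the slit (−∞, 0]. Then δ·Log(E) + ε·Log(D) + Real.log(√(τ+s)) = δ·Log(z − D·√τ) + ε·Log(z − E·√τ), where Log is the principal complex logarithm and Real.log(√(τ+s)) is regarded as a complex number. -/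
set_option maxHeartbeats 1000000 in
theorem loewner_tip_equation_sqrt_tau_add_t
    (c D E δ ε : ℂ) (hc4 : c ≠ 4 * Complex.I) (hc4' : c ≠ -4 * Complex.I)
    (hD : D = (c + (c ^ 2 + 16) ^ ((1 : ℂ) / 2)) / 2)
    (hE : E = (c - (c ^ 2 + 16) ^ ((1 : ℂ) / 2)) / 2)
    (hδ : δ = (1 - c / (c ^ 2 + 16) ^ ((1 : ℂ) / 2)) / 2)
    (hε : ε = (1 + c / (c ^ 2 + 16) ^ ((1 : ℂ) / 2)) / 2)
    (τ s : ℝ) (hτ : 0 < τ) (hs : 0 < s)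
    (g : ℝ → ℂ) (z : ℂ)
    (hcont : ContinuousOn g (Set.Icc 0 s))
    (hg0 : g 0 = z) (hgs : g s = c * (Real.sqrt (τ + s) : ℂ))
    (h : ∀ t ∈ Set.Ico (0 : ℝ) s,
      g t ≠ c * (Real.sqrt (τ + t) : ℂ) ∧
      HasDerivAt g (2 / (g t - c * (Real.sqrt (τ + t) : ℂ))) t)
    (hslit : ∀ t ∈ Set.Icc (0 : ℝ) s,
      (g t - D * (Real.sqrt (τ + t) : ℂ)) ∈ Complex.slitPlane ∧
      (g t - E * (Real.sqrt (τ + t) : ℂ)) ∈ Complex.slitPlane) :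
    δ * Complex.log E + ε * Complex.log D
      + (Real.log (Real.sqrt (τ + s)) : ℂ)
      = δ * Complex.log (z - D * (Real.sqrt τ : ℂ))
        + ε * Complex.log (z - E * (Real.sqrt τ : ℂ)) := by
  set S : ℂ := (c ^ 2 + 16) ^ ((1 : ℂ) / 2) with hSdef
  have hfac : c ^ 2 + 16 = (c - 4 * Complex.I) * (c + 4 * Complex.I) := by
    linear_combination (16 : ℂ) * Complex.I_sq
  have hw : c ^ 2 + 16 ≠ 0 := by
    rw [hfac]
    exact mul_ne_zero (sub_ne_zero.mpr hc4) (fun h0 => hc4' (by linear_combination h0))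
  have hS : S ≠ 0 := by
    rw [hSdef, Ne, Complex.cpow_eq_zero_iff]; tauto
  have hS2 : S ^ 2 = c ^ 2 + 16 := by
    have : S * S = (c ^ 2 + 16) ^ ((1 : ℂ) / 2 + 1 / 2) := (Complex.cpow_add _ _ hw).symm
    rw [sq, this]; norm_num
  have h0 : c = D + E := by rw [hD, hE]; ring
  have h1 : δ + ε = 1 := by rw [hδ, hε]; field_simp; ring
  have h2 : δ * E + ε * D = c := by
    rw [hδ, hε, hD, hE]; field_simp; ring
  have h3 : δ * D + ε * E = 0 := by
    rw [hδ, hε, hD, hE]; field_simp; ring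
  have h4 : D * E = -4 := by
    rw [hD, hE]; linear_combination (-(1 : ℂ) / 4) * hS2
  clear_value S
  have hDne : D ≠ 0 := fun h0 => by simp [h0] at h4
  have hEne : E ≠ 0 := fun h0 => by simp [h0] at h4
  -- the conserved quantity
  set F : ℝ → ℂ := fun t =>
    δ * Complex.log (g t - D * (Real.sqrt (τ + t) : ℂ))
      + ε * Complex.log (g t - E * (Real.sqrt (τ + t) : ℂ)) with hF
  -- derivative zero on Ico
  have hderiv : ∀ t ∈ Set.Ico (0 : ℝ) s, HasDerivAt F 0 t := by
    intro t ht
    have htpos : 0 < τ + t := by linarith [ht.1]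
    have hIcc : t ∈ Set.Icc (0 : ℝ) s := ⟨ht.1, le_of_lt ht.2⟩
    have hRpos : 0 < Real.sqrt (τ + t) := Real.sqrt_pos.mpr htpos
    set R : ℂ := (Real.sqrt (τ + t) : ℂ) with hRdef
    have hRne : R ≠ 0 := by
      simpa [hRdef] using Complex.ofReal_ne_zero.mpr (ne_of_gt hRpos)
    have hsq : HasDerivAt (fun u => Real.sqrt (τ + u)) (1 / (2 * Real.sqrt (τ + t))) t := by
      simpa [Function.comp_def] using (Real.hasDerivAt_sqrt (ne_of_gt htpos)).comp t ((hasDerivAt_id t).const_add τ)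
    have hr : HasDerivAt (fun u => ((Real.sqrt (τ + u) : ℂ)))
        (1 / (2 * R)) t := by
      have := hsq.ofReal_comp
      convert this using 1
      rw [hRdef]; push_cast; ring
    have hgd := (h t ht).2
    have hane : g t - D * R ≠ 0 := Complex.slitPlane_ne_zero (hslit t hIcc).1
    have hbne : g t - E * R ≠ 0 := Complex.slitPlane_ne_zero (hslit t hIcc).2
    have hcne : g t - c * R ≠ 0 := sub_ne_zero.mpr (h t ht).1
    have hA : HasDerivAt (fun u => g u - D * (Real.sqrt (τ + u) : ℂ))
        (2 / (g t - c * R) - D * (1 / (2 * R))) t := hgd.sub (hr.const_mul D)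
    have hB : HasDerivAt (fun u => g u - E * (Real.sqrt (τ + u) : ℂ))
        (2 / (g t - c * R) - E * (1 / (2 * R))) t := hgd.sub (hr.const_mul E)
    have hlogA : HasDerivAt (fun u => Complex.log (g u - D * (Real.sqrt (τ + u) : ℂ)))
        ((g t - D * R)⁻¹ * (2 / (g t - c * R) - D * (1 / (2 * R)))) t :=
      by have := (Complex.hasDerivAt_log (hslit t hIcc).1).comp t hA; exact this
    have hlogB : HasDerivAt (fun u => Complex.log (g u - E * (Real.sqrt (τ + u) : ℂ)))
        ((g t - E * R)⁻¹ * (2 / (g t - c * R) - E * (1 / (2 * R)))) t :=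
      by have := (Complex.hasDerivAt_log (hslit t hIcc).2).comp t hB; exact this
    have hkey : δ * ((g t - D * R)⁻¹ * (2 / (g t - c * R) - D * (1 / (2 * R))))
        + ε * ((g t - E * R)⁻¹ * (2 / (g t - c * R) - E * (1 / (2 * R)))) = 0 := by
      set G := g t with hG
      have e1 : δ * (G - E * R) + ε * (G - D * R) = G - c * R := by
        linear_combination G * h1 - R * h2
      have e2 : δ * D * (G - E * R) + ε * E * (G - D * R) = 4 * R := by
        linear_combination G * h3 - R * D * E * h1 - R * h4
      have h2R : (2 : ℂ) * R ≠ 0 := mul_ne_zero two_ne_zero hRne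
      have hden : (G - D * R) * (G - E * R) * ((G - c * R) * (2 * R)) ≠ 0 :=
        mul_ne_zero (mul_ne_zero hane hbne) (mul_ne_zero hcne h2R)
      have expand : (δ * ((G - D * R)⁻¹ * (2 / (G - c * R) - D * (1 / (2 * R))))
          + ε * ((G - E * R)⁻¹ * (2 / (G - c * R) - E * (1 / (2 * R)))))
          * ((G - D * R) * (G - E * R) * ((G - c * R) * (2 * R)))
          = 4 * R * (δ * (G - E * R) + ε * (G - D * R))
              - (G - c * R) * (δ * D * (G - E * R) + ε * E * (G - D * R)) := by
        have iA := inv_mul_cancel₀ hane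
        have iB := inv_mul_cancel₀ hbne
        have iC := inv_mul_cancel₀ hcne
        have iR := inv_mul_cancel₀ h2R
        linear_combination 2 * δ * (G - E * R) * (2 * R) * ((G - c * R)⁻¹ * (G - c * R) * iA + iC)
          - δ * D * (G - E * R) * (G - c * R) * ((2 * R)⁻¹ * (2 * R) * iA + iR)
          + 2 * ε * (G - D * R) * (2 * R) * ((G - c * R)⁻¹ * (G - c * R) * iB + iC)
          - ε * E * (G - D * R) * (G - c * R) * ((2 * R)⁻¹ * (2 * R) * iB + iR)
      have hzero : (δ * ((G - D * R)⁻¹ * (2 / (G - c * R) - D * (1 / (2 * R))))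
          + ε * ((G - E * R)⁻¹ * (2 / (G - c * R) - E * (1 / (2 * R)))))
          * ((G - D * R) * (G - E * R) * ((G - c * R) * (2 * R))) = 0 := by
        rw [expand, e1, e2]; ring
      exact (mul_eq_zero.mp hzero).resolve_right hden
    have := ((hlogA.const_mul δ).add (hlogB.const_mul ε))
    rw [hkey] at this
    exact this
  -- continuity of F on Icc
  have hrC : Continuous (fun u : ℝ => ((Real.sqrt (τ + u) : ℂ))) :=
    Complex.continuous_ofReal.comp (Real.continuous_sqrt.comp (continuous_const.add continuous_id))
  have hFc : ContinuousOn F (Set.Icc 0 s) := by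
    apply ContinuousOn.add
    · exact continuousOn_const.mul ((hcont.sub (hrC.continuousOn.const_smul D)).clog
        (fun x hx => by simpa [smul_eq_mul] using (hslit x hx).1))
    · exact continuousOn_const.mul ((hcont.sub (hrC.continuousOn.const_smul E)).clog
        (fun x hx => by simpa [smul_eq_mul] using (hslit x hx).2))
  -- constancy
  have hconst : F s = F 0 := by
    have := eq_of_has_deriv_right_eq (f' := fun _ => (0 : ℂ)) (a := 0) (b := s)
      (fun x hx => (hderiv x hx).hasDerivWithinAt)
      (fun x _ => (hasDerivWithinAt_const x _ (F 0)).congr_deriv rfl)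
      hFc continuousOn_const rfl
    exact this s ⟨le_of_lt hs, le_refl s⟩
  -- log of products with positive reals
  have hlogmul : ∀ (w : ℂ), w ≠ 0 → ∀ x : ℝ, 0 < x →
      Complex.log (w * x) = Complex.log w + Real.log x := by
    intro w hwne x hx
    rw [Complex.log_mul hwne (Complex.ofReal_ne_zero.mpr (ne_of_gt hx)),
      ← Complex.ofReal_log (le_of_lt hx)]
    rw [Complex.arg_ofReal_of_nonneg (le_of_lt hx), add_zero]
    exact Complex.arg_mem_Ioc w
  have hRs : (0 : ℝ) < Real.sqrt (τ + s) := Real.sqrt_pos.mpr (by linarith)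
  -- evaluate F s
  have hFs : F s = δ * Complex.log E + ε * Complex.log D
      + (Real.log (Real.sqrt (τ + s)) : ℂ) := by
    rw [hF]
    simp only [hgs]
    rw [show c * (Real.sqrt (τ + s) : ℂ) - D * (Real.sqrt (τ + s) : ℂ)
        = E * (Real.sqrt (τ + s) : ℂ) by rw [h0]; ring,
      show c * (Real.sqrt (τ + s) : ℂ) - E * (Real.sqrt (τ + s) : ℂ)
        = D * (Real.sqrt (τ + s) : ℂ) by rw [h0]; ring,
      hlogmul E hEne _ hRs, hlogmul D hDne _ hRs]
    have : δ * (Real.log (Real.sqrt (τ + s)) : ℂ) + ε * (Real.log (Real.sqrt (τ + s)) : ℂ)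
        = (Real.log (Real.sqrt (τ + s)) : ℂ) := by
      rw [← add_mul, h1, one_mul]
    linear_combination this
  have hF0 : F 0 = δ * Complex.log (z - D * (Real.sqrt τ : ℂ))
      + ε * Complex.log (z - E * (Real.sqrt τ : ℂ)) := by
    rw [hF]
    simp [hg0]
  rw [← hFs, ← hF0, hconst]
end

section
/- Let c ∈ ℂ with c ≠ 4i and c ≠ −4i, let D, E, δ, ε be the associated Loewner parameters for the driving function c√(τ+t) with τ = 0, and let s > 0. Suppose g : ℝ → ℂ is continuous at 0 with g(0) = z, for every t ∈ (0,s] the point g(t) satisfies g(t) ≠ c·√t and g has derivative 2/(g(t) − c·√t) at t, and for every t ∈ [0,s] both g(t) − D·√t and g(t) − E·√t lie outside the slit (−∞, 0] (at t = 0 this says z ∉ (−∞, 0]). Then (g(s) − D·√s)^δ · (g(s) − E·√s)^ε = z, where z^w denotes the principal complex power exp(w·Log z). (This gives the explicit formula g_t^{−1}(w) = (w − D√t)^δ(w − E√t)^ε for the inverse Loewner map driven by c√t.) -/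
theorem loewner_inverse_map_sqrt_t
    (c D E δ ε : ℂ) (hc4 : c ≠ 4 * Complex.I) (hc4' : c ≠ -4 * Complex.I)
    (hD : D = (c + (c ^ 2 + 16) ^ ((1 : ℂ) / 2)) / 2)
    (hE : E = (c - (c ^ 2 + 16) ^ ((1 : ℂ) / 2)) / 2)
    (hδ : δ = (1 - c / (c ^ 2 + 16) ^ ((1 : ℂ) / 2)) / 2)
    (hε : ε = (1 + c / (c ^ 2 + 16) ^ ((1 : ℂ) / 2)) / 2)
    (s : ℝ) (hs : 0 < s)
    (g : ℝ → ℂ) (z : ℂ)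
    (hcont : ContinuousAt g 0) (hg0 : g 0 = z)
    (h : ∀ t ∈ Set.Ioc (0 : ℝ) s,
      g t ≠ c * (Real.sqrt t : ℂ) ∧
      HasDerivAt g (2 / (g t - c * (Real.sqrt t : ℂ))) t)
    (hslit : ∀ t ∈ Set.Icc (0 : ℝ) s,
      (g t - D * (Real.sqrt t : ℂ)) ∈ Complex.slitPlane ∧
      (g t - E * (Real.sqrt t : ℂ)) ∈ Complex.slitPlane) :
    (g s - D * (Real.sqrt s : ℂ)) ^ δ * (g s - E * (Real.sqrt s : ℂ)) ^ ε
      = z := by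
  set q : ℂ := (c ^ 2 + 16) ^ ((1 : ℂ) / 2) with hqdef
  have hc2 : c ^ 2 + 16 ≠ 0 := by
    intro h0
    have hI : Complex.I ^ 2 = -1 := Complex.I_sq
    have : (c - 4 * Complex.I) * (c + 4 * Complex.I) = 0 := by
      linear_combination h0 - 16 * hI
    rcases mul_eq_zero.1 this with h1 | h1
    · exact hc4 (sub_eq_zero.1 h1)
    · exact hc4' (by rw [neg_mul]; exact eq_neg_of_add_eq_zero_left h1)
  have hq2 : q * q = c ^ 2 + 16 := by
    rw [hqdef, ← Complex.cpow_add _ _ hc2]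
    norm_num
  have hqne : q ≠ 0 := by
    intro h0; apply hc2; rw [← hq2, h0, mul_zero]
  have hDpE : D + E = c := by rw [hD, hE]; ring
  have hDE : D * E = -4 := by
    rw [hD, hE]
    field_simp
    linear_combination -hq2
  have hsum : δ + ε = 1 := by rw [hδ, hε]; field_simp; ring
  have hδDεE : δ * D + ε * E = 0 := by
    rw [hδ, hε, hD, hE]; field_simp; ring
  set F : ℝ → ℂ := fun t =>
    (g t - D * (Real.sqrt t : ℂ)) ^ δ * (g t - E * (Real.sqrt t : ℂ)) ^ ε with hF
  have hFderiv : ∀ t ∈ Set.Ioc (0 : ℝ) s, HasDerivAt F 0 t := by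
    intro t ht
    obtain ⟨htne, htd⟩ := h t ht
    have ht0 : (0 : ℝ) < t := ht.1
    obtain ⟨ha, hb⟩ := hslit t ⟨ht0.le, ht.2⟩
    have hrt : (0 : ℝ) < Real.sqrt t := Real.sqrt_pos.2 ht0
    set r : ℂ := ((Real.sqrt t : ℝ) : ℂ) with hrdef
    set w : ℂ := g t with hwdef
    have hrne : r ≠ 0 := by
      simpa [hrdef] using Complex.ofReal_ne_zero.2 hrt.ne'
    have haz : w - D * r ≠ 0 := Complex.slitPlane_ne_zero ha
    have hbz : w - E * r ≠ 0 := Complex.slitPlane_ne_zero hb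
    have hwc : w - c * r ≠ 0 := sub_ne_zero.2 htne
    have hsq : HasDerivAt (fun u : ℝ => ((Real.sqrt u : ℝ) : ℂ))
        (((1 / (2 * Real.sqrt t) : ℝ) : ℂ)) t :=
      (Real.hasDerivAt_sqrt ht0.ne').ofReal_comp
    have hA : HasDerivAt (fun u => g u - D * ((Real.sqrt u : ℝ) : ℂ))
        (2 / (w - c * r) - D * ((1 / (2 * Real.sqrt t) : ℝ) : ℂ)) t :=
      htd.sub (hsq.const_mul D)
    have hB : HasDerivAt (fun u => g u - E * ((Real.sqrt u : ℝ) : ℂ))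
        (2 / (w - c * r) - E * ((1 / (2 * Real.sqrt t) : ℝ) : ℂ)) t :=
      htd.sub (hsq.const_mul E)
    have hFa : HasDerivAt (fun u => (g u - D * ((Real.sqrt u : ℝ) : ℂ)) ^ δ)
        (δ * (w - D * r) ^ (δ - 1) *
          (2 / (w - c * r) - D * ((1 / (2 * Real.sqrt t) : ℝ) : ℂ))) t :=
      HasDerivAt.comp (h₂ := fun x => x ^ δ) t (Complex.hasStrictDerivAt_cpow_const ha).hasDerivAt hA
    have hFb : HasDerivAt (fun u => (g u - E * ((Real.sqrt u : ℝ) : ℂ)) ^ ε)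
        (ε * (w - E * r) ^ (ε - 1) *
          (2 / (w - c * r) - E * ((1 / (2 * Real.sqrt t) : ℝ) : ℂ))) t :=
      HasDerivAt.comp (h₂ := fun x => x ^ ε) t (Complex.hasStrictDerivAt_cpow_const hb).hasDerivAt hB
    convert hFa.mul hFb using 1
    case e'_4 => rfl
    case e'_8 => rfl
    have hcast : ((1 / (2 * Real.sqrt t) : ℝ) : ℂ) = 1 / (2 * r) := by
      push_cast [hrdef]; ring
    rw [hcast, Complex.cpow_sub _ _ haz, Complex.cpow_sub _ _ hbz,
      Complex.cpow_one, Complex.cpow_one]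
    have key : δ * (2 / (w - c * r) - D * (1 / (2 * r))) / (w - D * r)
        + ε * (2 / (w - c * r) - E * (1 / (2 * r))) / (w - E * r) = 0 := by
      have hc : c = D + E := hDpE.symm
      rw [hc] at hwc ⊢
      field_simp [hwc]
      linear_combination (δ * (w - E * r) * r + ε * (w - D * r) * r) * hDE
        - (w - D * r) * (w - E * r) * hδDεE
    have expand : δ * ((w - D * r) ^ δ / (w - D * r)) *
          (2 / (w - c * r) - D * (1 / (2 * r))) * (w - E * r) ^ ε
        + (w - D * r) ^ δ * (ε * ((w - E * r) ^ ε / (w - E * r)) *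
          (2 / (w - c * r) - E * (1 / (2 * r))))
        = (w - D * r) ^ δ * (w - E * r) ^ ε *
          (δ * (2 / (w - c * r) - D * (1 / (2 * r))) / (w - D * r)
            + ε * (2 / (w - c * r) - E * (1 / (2 * r))) / (w - E * r)) := by
      ring
    rw [expand, key, mul_zero]
  -- F is constant on every [t, s] with 0 < t ≤ s
  have hconst : ∀ t ∈ Set.Ioc (0 : ℝ) s, F t = F s := by
    intro t ht
    have hcont' : ContinuousOn F (Set.Icc t s) := by
      intro x hx
      have hx' : x ∈ Set.Ioc (0 : ℝ) s := ⟨lt_of_lt_of_le ht.1 hx.1, hx.2⟩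
      exact ((hFderiv x hx').continuousAt).continuousWithinAt
    have hderiv' : ∀ x ∈ Set.Ico t s, HasDerivWithinAt F 0 (Set.Ici x) x := by
      intro x hx
      exact (hFderiv x ⟨lt_of_lt_of_le ht.1 hx.1, hx.2.le⟩).hasDerivWithinAt
    exact (constant_of_has_deriv_right_zero hcont' hderiv' s
      ⟨ht.2, le_refl s⟩).symm
  -- F is continuous at 0 from within, F 0 = z
  have hz0 : z ∈ Complex.slitPlane := by
    have := (hslit 0 ⟨le_refl 0, hs.le⟩).1
    simpa [Real.sqrt_zero, hg0] using this
  have hz0' : z ∈ Complex.slitPlane := hz0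
  have hzE : z ∈ Complex.slitPlane := by
    have := (hslit 0 ⟨le_refl 0, hs.le⟩).2
    simpa [Real.sqrt_zero, hg0] using this
  have hzne : z ≠ 0 := Complex.slitPlane_ne_zero hz0
  have hF0 : F 0 = z := by
    simp only [hF, Real.sqrt_zero, Complex.ofReal_zero, mul_zero, sub_zero, hg0]
    rw [← Complex.cpow_add _ _ hzne, hsum, Complex.cpow_one]
  have hcontF : ContinuousWithinAt F (Set.Ioc 0 s) 0 := by
    have hca : ContinuousAt (fun t : ℝ => g t - D * ((Real.sqrt t : ℝ) : ℂ)) 0 :=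
      hcont.sub ((Complex.continuous_ofReal.comp Real.continuous_sqrt).continuousAt.const_mul D)
    have hcb : ContinuousAt (fun t : ℝ => g t - E * ((Real.sqrt t : ℝ) : ℂ)) 0 :=
      hcont.sub ((Complex.continuous_ofReal.comp Real.continuous_sqrt).continuousAt.const_mul E)
    have ha0 : (fun t : ℝ => g t - D * ((Real.sqrt t : ℝ) : ℂ)) 0 ∈ Complex.slitPlane := by
      simpa [Real.sqrt_zero, hg0] using hz0
    have hb0 : (fun t : ℝ => g t - E * ((Real.sqrt t : ℝ) : ℂ)) 0 ∈ Complex.slitPlane := by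
      simpa [Real.sqrt_zero, hg0] using hzE
    exact (((hca.cpow continuousAt_const ha0).mul
      (hcb.cpow continuousAt_const hb0)).continuousWithinAt)
  have hneBot : (nhdsWithin (0 : ℝ) (Set.Ioc 0 s)).NeBot := by
    rw [← mem_closure_iff_nhdsWithin_neBot, closure_Ioc hs.ne]
    exact ⟨le_refl 0, hs.le⟩
  have h1 : Filter.Tendsto F (nhdsWithin (0 : ℝ) (Set.Ioc 0 s)) (nhds (F 0)) := hcontF
  have h2 : Filter.Tendsto F (nhdsWithin (0 : ℝ) (Set.Ioc 0 s)) (nhds (F s)) := by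
    have : ∀ᶠ x in nhdsWithin (0 : ℝ) (Set.Ioc 0 s), F x = F s := by
      filter_upwards [self_mem_nhdsWithin] with x hx using hconst x hx
    exact Filter.Tendsto.congr' (Filter.EventuallyEq.symm this) tendsto_const_nhds
  have : F s = F 0 := tendsto_nhds_unique h2 h1
  rw [hF0] at this
  exact this
end

section
/- Let c ∈ ℂ with c ≠ 4i and c ≠ −4i, let D, E, δ, ε be the associated Loewner parameters for the driving function c√(τ+t) with τ = 0, and let s > 0. Suppose g : ℝ → ℂ is continuous at 0 and at s with g(0) = z and g(s) = c·√s, for every t ∈ (0,s) the point g(t) satisfies g(t) ≠ c·√t and g has derivative 2/(g(t) − c·√t) at t, and for every t ∈ [0,s] both g(t) − D·√t and g(t) − E·√t lie outside the slit (−∞, 0] (at t = s this says E·√s ∉ (−∞,0] and D·√s ∉ (−∞,0]). Then z = (E·√s)^δ · (D·√s)^ε, where z^w denotes the principal complex power exp(w·Log z). (In particular, every point captured by the driving function c√t at time s lies on the set {(E√s)^δ(D√s)^ε}, so the hull grows along rays from the origin.) -/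
open Complex Set Filter Topology

private lemma loewner_key0 (D E δ ε w st r : ℂ) (hw : w ≠ 0) (hq0 : D - E ≠ 0)
    (hst : 2 * r * st = 1) (hDE : D * E = -4)
    (hδ : δ * (D - E) = -E) (hε : ε * (D - E) = D) :
    δ * (2 / w - D * r) * (w + D * st) + ε * (2 / w - E * r) * (w + E * st) = 0 := by
  field_simp
  have h3 : (δ * (2 - w * (D * r)) * (w + D * st) + ε * (2 - w * (E * r)) * (w + E * st)) * (D - E) = 0 := by
    linear_combination ((2 - w * (D * r)) * (w + D * st)) * hδ + ((2 - w * (E * r)) * (w + E * st)) * hε + (-2 * (D - E) * w) * hst + ((D - E) * w * r * st) * hDE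
  have h4 := (mul_eq_zero.mp h3).resolve_right hq0
  linear_combination h4

private lemma loewner_key1 (δ ε A B u v U V : ℂ) (hu : u ≠ 0) (hv : v ≠ 0)
    (key : δ * A * v + ε * B * u = 0) :
    δ * (U / u) * A * V + U * (ε * (V / v) * B) = 0 := by
  field_simp
  linear_combination (U * V) * key

theorem loewner_tips_sqrt_t
    (c D E δ ε : ℂ) (hc4 : c ≠ 4 * Complex.I) (hc4' : c ≠ -4 * Complex.I)
    (hD : D = (c + (c ^ 2 + 16) ^ ((1 : ℂ) / 2)) / 2)
    (hE : E = (c - (c ^ 2 + 16) ^ ((1 : ℂ) / 2)) / 2)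
    (hδ : δ = (1 - c / (c ^ 2 + 16) ^ ((1 : ℂ) / 2)) / 2)
    (hε : ε = (1 + c / (c ^ 2 + 16) ^ ((1 : ℂ) / 2)) / 2)
    (s : ℝ) (hs : 0 < s)
    (g : ℝ → ℂ) (z : ℂ)
    (hcont0 : ContinuousAt g 0) (hconts : ContinuousAt g s)
    (hg0 : g 0 = z) (hgs : g s = c * (Real.sqrt s : ℂ))
    (h : ∀ t ∈ Set.Ioo (0 : ℝ) s,
      g t ≠ c * (Real.sqrt t : ℂ) ∧
      HasDerivAt g (2 / (g t - c * (Real.sqrt t : ℂ))) t)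
    (hslit : ∀ t ∈ Set.Icc (0 : ℝ) s,
      (g t - D * (Real.sqrt t : ℂ)) ∈ Complex.slitPlane ∧
      (g t - E * (Real.sqrt t : ℂ)) ∈ Complex.slitPlane) :
    z = (E * (Real.sqrt s : ℂ)) ^ δ * (D * (Real.sqrt s : ℂ)) ^ ε := by
  set q : ℂ := (c ^ 2 + 16) ^ ((1 : ℂ) / 2) with hq
  have hc2 : (c ^ 2 + 16 : ℂ) ≠ 0 := by
    have h1 : c - 4 * Complex.I ≠ 0 := sub_ne_zero.mpr hc4
    have h2 : c - -4 * Complex.I ≠ 0 := sub_ne_zero.mpr hc4'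
    have hmul : (c - 4 * Complex.I) * (c - -4 * Complex.I) = c ^ 2 + 16 := by
      linear_combination (-16 : ℂ) * Complex.I_sq
    rw [← hmul]
    exact mul_ne_zero h1 h2
  have hq0 : q ≠ 0 := by
    rw [hq]
    intro h0
    exact hc2 ((Complex.cpow_eq_zero_iff _ _).mp h0).1
  have hqq : q * q = c ^ 2 + 16 := by
    rw [hq, ← Complex.cpow_add _ _ hc2]
    norm_num
  have hDEq : D - E = q := by rw [hD, hE]; ring
  have hq0' : D - E ≠ 0 := hDEq ▸ hq0
  have hcDE : D + E = c := by rw [hD, hE]; ring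
  have hDEm : D * E = -4 := by
    rw [hD, hE]
    linear_combination (-(1 : ℂ)/4) * hqq
  have hδq : δ * (D - E) = -E := by
    rw [hδ, hDEq, hE]
    field_simp
    ring
  have hεq : ε * (D - E) = D := by
    rw [hε, hDEq, hD]
    field_simp
    ring
  have hδε : δ + ε = 1 := by rw [hδ, hε]; ring
  set φ : ℝ → ℂ := fun t =>
    (g t - D * (Real.sqrt t : ℂ)) ^ δ * (g t - E * (Real.sqrt t : ℂ)) ^ ε with hφdef
  -- continuity of g on [0, s]
  have hgc : ContinuousOn g (Set.Icc 0 s) := by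
    intro x hx
    rcases eq_or_lt_of_le hx.1 with rfl | h0
    · exact hcont0.continuousWithinAt
    rcases eq_or_lt_of_le hx.2 with rfl | h1
    · exact hconts.continuousWithinAt
    · exact ((h x ⟨h0, h1⟩).2.continuousAt).continuousWithinAt
  have hsqc : ContinuousOn (fun t : ℝ => ((Real.sqrt t : ℝ) : ℂ)) (Set.Icc 0 s) :=
    (Complex.continuous_ofReal.comp Real.continuous_sqrt).continuousOn
  have hφc : ContinuousOn φ (Set.Icc 0 s) := by
    intro x hx
    have hu : ContinuousWithinAt (fun t => g t - D * (Real.sqrt t : ℂ)) (Set.Icc 0 s) x :=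
      (hgc x hx).sub (continuousWithinAt_const.mul (hsqc x hx))
    have hv : ContinuousWithinAt (fun t => g t - E * (Real.sqrt t : ℂ)) (Set.Icc 0 s) x :=
      (hgc x hx).sub (continuousWithinAt_const.mul (hsqc x hx))
    exact (hu.cpow continuousWithinAt_const (hslit x hx).1).mul
      (hv.cpow continuousWithinAt_const (hslit x hx).2)
  -- derivative of φ is zero on (0, s)
  have hderiv : ∀ t ∈ Set.Ioo (0 : ℝ) s, HasDerivAt φ 0 t := by
    intro t ht
    have ht0 : (0 : ℝ) < t := ht.1
    have hst0 : Real.sqrt t ≠ 0 := by positivity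
    set st : ℂ := ((Real.sqrt t : ℝ) : ℂ) with hstdef
    set r : ℂ := ((1 / (2 * Real.sqrt t) : ℝ) : ℂ) with hrdef
    have hst0' : st ≠ 0 := Complex.ofReal_ne_zero.mpr hst0
    have hrst : 2 * r * st = 1 := by
      rw [hrdef, hstdef]
      push_cast
      field_simp
      exact div_self (Complex.ofReal_ne_zero.mpr hst0)
    have hsq : HasDerivAt (fun x : ℝ => ((Real.sqrt x : ℝ) : ℂ)) r t :=
      (Real.hasDerivAt_sqrt ht0.ne').ofReal_comp
    obtain ⟨hne, hgd⟩ := h t ht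
    set w : ℂ := g t - c * st with hwdef
    have hw : w ≠ 0 := sub_ne_zero.mpr hne
    have hmem := hslit t (Set.Ioo_subset_Icc_self ht)
    have hu0 : g t - D * st ≠ 0 := Complex.slitPlane_ne_zero hmem.1
    have hv0 : g t - E * st ≠ 0 := Complex.slitPlane_ne_zero hmem.2
    have hu : HasDerivAt (fun x => g x - D * ((Real.sqrt x : ℝ) : ℂ)) (2 / w - D * r) t :=
      hgd.sub (hsq.const_mul D)
    have hv : HasDerivAt (fun x => g x - E * ((Real.sqrt x : ℝ) : ℂ)) (2 / w - E * r) t :=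
      hgd.sub (hsq.const_mul E)
    have hU : HasDerivAt (fun x : ℝ => (g x - D * ((Real.sqrt x : ℝ) : ℂ)) ^ δ)
        (δ * (g t - D * st) ^ (δ - 1) * (2 / w - D * r)) t := by
      have h2 := (Complex.hasStrictDerivAt_cpow_const (c := δ) hmem.1).hasDerivAt.comp t hu
      convert h2 using 1
      rfl
      rfl
    have hV : HasDerivAt (fun x : ℝ => (g x - E * ((Real.sqrt x : ℝ) : ℂ)) ^ ε)
        (ε * (g t - E * st) ^ (ε - 1) * (2 / w - E * r)) t := by
      have h2 := (Complex.hasStrictDerivAt_cpow_const (c := ε) hmem.2).hasDerivAt.comp t hv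
      convert h2 using 1
      rfl
      rfl
    have hm := hU.mul hV
    have hueq : g t - D * st = w + E * st := by
      rw [hwdef]; linear_combination (-st) * hcDE
    have hveq : g t - E * st = w + D * st := by
      rw [hwdef]; linear_combination (-st) * hcDE
    have key := loewner_key0 D E δ ε w st r hw hq0' hrst hDEm hδq hεq
    rw [← hueq, ← hveq] at key
    have hval : δ * (g t - D * st) ^ (δ - 1) * (2 / w - D * r) * (g t - E * st) ^ ε
        + (g t - D * st) ^ δ * (ε * (g t - E * st) ^ (ε - 1) * (2 / w - E * r)) = 0 := by
      rw [Complex.cpow_sub _ _ hu0, Complex.cpow_sub _ _ hv0, Complex.cpow_one, Complex.cpow_one]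
      exact loewner_key1 δ ε (2 / w - D * r) (2 / w - E * r) _ _ _ _ hu0 hv0 key
    rw [hval] at hm
    exact hm
  -- φ is constant on (0, s]
  have hconst : ∀ t ∈ Set.Ioo (0 : ℝ) s, φ s = φ t := by
    intro t ht
    have hsub : Set.Icc t s ⊆ Set.Icc 0 s := Set.Icc_subset_Icc ht.1.le le_rfl
    have := constant_of_has_deriv_right_zero (f := φ) (a := t) (b := s)
      (hφc.mono hsub)
      (fun x hx => (hderiv x ⟨lt_of_lt_of_le ht.1 hx.1, hx.2⟩).hasDerivWithinAt)
    exact this s ⟨ht.2.le, le_rfl⟩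
  -- limit as t → 0⁺
  have hcl : (0 : ℝ) ∈ closure (Set.Ioo 0 s) := by
    rw [closure_Ioo hs.ne]
    exact ⟨le_rfl, hs.le⟩
  haveI : (𝓝[Set.Ioo (0:ℝ) s] (0:ℝ)).NeBot := mem_closure_iff_nhdsWithin_neBot.mp hcl
  have t1 : Filter.Tendsto φ (𝓝[Set.Ioo (0:ℝ) s] 0) (𝓝 (φ 0)) :=
    (hφc 0 ⟨le_rfl, hs.le⟩).mono Set.Ioo_subset_Icc_self
  have t2 : Filter.Tendsto φ (𝓝[Set.Ioo (0:ℝ) s] 0) (𝓝 (φ s)) := by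
    apply Filter.Tendsto.congr' _ tendsto_const_nhds
    filter_upwards [self_mem_nhdsWithin] with x hx
    exact hconst x hx
  have h0s : φ 0 = φ s := tendsto_nhds_unique t1 t2
  -- compute φ 0 and φ s
  have hz0 : z ≠ 0 := by
    have := (hslit 0 ⟨le_rfl, hs.le⟩).1
    rw [Real.sqrt_zero, hg0] at this
    simpa using Complex.slitPlane_ne_zero this
  have hφ0 : φ 0 = z := by
    rw [hφdef]
    simp only [Real.sqrt_zero, Complex.ofReal_zero, mul_zero, sub_zero, hg0]
    rw [← Complex.cpow_add _ _ hz0, hδε, Complex.cpow_one]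
  have e1 : g s - D * (Real.sqrt s : ℂ) = E * (Real.sqrt s : ℂ) := by
    rw [hgs]; linear_combination (-((Real.sqrt s : ℝ) : ℂ)) * hcDE
  have e2 : g s - E * (Real.sqrt s : ℂ) = D * (Real.sqrt s : ℂ) := by
    rw [hgs]; linear_combination (-((Real.sqrt s : ℝ) : ℂ)) * hcDE
  have hφs : φ s = (E * (Real.sqrt s : ℂ)) ^ δ * (D * (Real.sqrt s : ℂ)) ^ ε := by
    rw [hφdef]
    simp only [e1, e2]
  rw [← hφs, ← h0s, hφ0]
end

section
/- Let f : ℂ → ℂ be defined by f(z) = z + 2/(z − 2√2), and let U = {z ∈ ℂ : |z − 2√2| > √2}. Then f is injective on U, and the image f(U) equals the complement in ℂ of the real segment [0, 4√2], i.e. f(U) = ℂ \ {x + 0i : x ∈ ℝ, 0 ≤ x ≤ 4√2}. (Thus f is a conformal bijection from the exterior of the closed disk of radius √2 centered at 2√2 onto the complement of the segment [0, 4√2]; this is the time-1 Loewner map for the driving function 3√2·√(1−t).) -/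
open Complex

private lemma s_pos : (0:ℝ) < Real.sqrt 2 := Real.sqrt_pos.2 (by norm_num)

private lemma s_sq : Real.sqrt 2 * Real.sqrt 2 = 2 := Real.mul_self_sqrt (by norm_num)

/-- If `t` is a root on the circle of radius √2 with companion root `u`, then `w` is on the
segment `[0, 4√2]`. -/
private lemma seg_of_root (w t u : ℂ) (hsum : t + u = w - 2 * (Real.sqrt 2 : ℂ))
    (hprod : t * u = 2) (ht : ‖t‖ = Real.sqrt 2) :
    w.im = 0 ∧ 0 ≤ w.re ∧ w.re ≤ 4 * Real.sqrt 2 := by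
  have ht0 : t ≠ 0 := by
    intro h
    rw [h, zero_mul] at hprod
    exact two_ne_zero hprod.symm
  have h2 : t * (starRingEnd ℂ) t = 2 := by
    rw [Complex.mul_conj]
    norm_cast
    rw [Complex.normSq_eq_norm_sq, ht]
    push_cast [Real.sq_sqrt (by norm_num : (0:ℝ) ≤ 2)]
    norm_num
  have hu : u = (starRingEnd ℂ) t := mul_left_cancel₀ ht0 (hprod.trans h2.symm)
  have hw : w = 2 * (Real.sqrt 2 : ℂ) + ((2 * t.re : ℝ) : ℂ) := by
    rw [← Complex.add_conj, ← hu]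
    linear_combination -hsum
  have hre : |t.re| ≤ Real.sqrt 2 := ht ▸ Complex.abs_re_le_norm t
  rw [abs_le] at hre
  rw [hw]
  refine ⟨by simp, ?_, ?_⟩ <;> simp <;> linarith [hre.1, hre.2]

theorem loewner_time_one_map_example :
    Set.InjOn (fun z : ℂ => z + 2 / (z - 2 * (Real.sqrt 2 : ℂ)))
      {z : ℂ | Real.sqrt 2 < ‖z - 2 * (Real.sqrt 2 : ℂ)‖} ∧
    (fun z : ℂ => z + 2 / (z - 2 * (Real.sqrt 2 : ℂ))) ''
        {z : ℂ | Real.sqrt 2 < ‖z - 2 * (Real.sqrt 2 : ℂ)‖}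
      = {w : ℂ | w.im = 0 ∧ 0 ≤ w.re ∧ w.re ≤ 4 * Real.sqrt 2}ᶜ := by
  set c : ℂ := 2 * (Real.sqrt 2 : ℂ) with hc
  constructor
  · -- Injectivity
    intro z₁ h₁ z₂ h₂ heq
    simp only [Set.mem_setOf_eq] at h₁ h₂ heq
    set t₁ := z₁ - c with ht₁
    set t₂ := z₂ - c with ht₂
    have ht₁0 : t₁ ≠ 0 := by
      intro h; rw [h] at h₁; simp at h₁; linarith [s_pos]
    have ht₂0 : t₂ ≠ 0 := by
      intro h; rw [h] at h₂; simp at h₂; linarith [s_pos]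
    have key : (t₁ - t₂) * (t₁ * t₂ - 2) = 0 := by
      have heq' : t₁ + 2 / t₁ = t₂ + 2 / t₂ := by
        have : z₁ + 2 / t₁ = z₂ + 2 / t₂ := heq
        rw [ht₁, ht₂]; linear_combination this
      field_simp at heq'
      linear_combination heq'
    have hne : t₁ * t₂ - 2 ≠ 0 := by
      intro h
      have h22 : t₁ * t₂ = 2 := by linear_combination h
      have := congrArg (‖·‖) h22
      rw [norm_mul] at this
      simp at this
      nlinarith [s_sq, h₁, h₂, s_pos]
    have : t₁ - t₂ = 0 := by
      rcases mul_eq_zero.1 key with h | h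
      · exact h
      · exact absurd h hne
    have : t₁ = t₂ := sub_eq_zero.1 this
    rw [ht₁, ht₂] at this
    exact sub_left_inj.1 this
  · -- Image equality
    ext w
    simp only [Set.mem_image, Set.mem_setOf_eq, Set.mem_compl_iff]
    constructor
    · rintro ⟨z, hz, rfl⟩
      rintro ⟨him, hre0, hre4⟩
      set t := z - c with ht
      have ht0 : t ≠ 0 := by
        intro h; rw [h] at hz; simp at hz; linarith [s_pos]
      have hN : 2 < Complex.normSq t := by
        rw [Complex.normSq_eq_norm_sq]
        nlinarith [s_sq, hz, s_pos]
      have hNpos : (0:ℝ) < Complex.normSq t := by linarith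
      -- imaginary part
      have him' : (z + 2 / t).im = t.im * (1 - 2 / Complex.normSq t) := by
        rw [Complex.add_im, Complex.div_im]
        have hz' : z = t + c := by rw [ht]; ring
        rw [hz']
        simp [hc]
        ring
      have htim : t.im = 0 := by
        rw [him'] at him
        rcases mul_eq_zero.1 him with h | h
        · exact h
        · exfalso
          have : Complex.normSq t = 2 := by
            field_simp at h
            linarith
          linarith
      -- real part
      have hre' : (z + 2 / t).re = 2 * Real.sqrt 2 + t.re + 2 * t.re / Complex.normSq t := by
        rw [Complex.add_re, Complex.div_re]
        have hz' : z = t + c := by rw [ht]; ring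
        rw [hz']
        simp [hc, htim]
        ring
      have hNsq : Complex.normSq t = t.re * t.re := by
        rw [Complex.normSq_apply, htim]; ring
      have habs : Real.sqrt 2 < |t.re| := by
        have : ‖t‖ = |t.re| := by
          rw [Complex.norm_def, Complex.normSq_apply, htim]
          simpa using Real.sqrt_mul_self_eq_abs t.re
        rw [← this]; exact hz
      rw [hre'] at hre0 hre4
      rw [hNsq] at hre0 hre4
      have hx0 : t.re ≠ 0 := by
        intro h; rw [h] at habs; simp at habs; linarith [s_pos]
      set q := 2 * t.re / (t.re * t.re) with hqdef
      have hq : q * t.re = 2 := by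
        rw [hqdef]; field_simp
      rcases lt_abs.1 habs with hx | hx
      · have hxpos : (0:ℝ) < t.re := lt_trans s_pos hx
        nlinarith [mul_pos (sub_pos.2 hx) (sub_pos.2 hx), s_sq, hq,
          mul_nonneg (by linarith : (0:ℝ) ≤ 2 * Real.sqrt 2 - t.re - q) hxpos.le]
      · have hxneg : t.re < -Real.sqrt 2 := by linarith
        nlinarith [mul_pos (show (0:ℝ) < -t.re - Real.sqrt 2 by linarith)
            (show (0:ℝ) < -t.re - Real.sqrt 2 by linarith), s_sq, hq, s_pos,
          mul_nonneg hre0 (show (0:ℝ) ≤ -t.re by linarith)]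
    · rintro hw
      set b : ℂ := w - c with hb
      obtain ⟨d, hd⟩ := IsAlgClosed.exists_pow_nat_eq (b ^ 2 - 8) (by norm_num : 0 < 2)
      set t₁ : ℂ := (b + d) / 2 with ht₁
      set t₂ : ℂ := (b - d) / 2 with ht₂
      have hsum : t₁ + t₂ = w - 2 * (Real.sqrt 2 : ℂ) := by
        rw [ht₁, ht₂, hb, hc]; ring
      have hprod : t₁ * t₂ = 2 := by
        rw [ht₁, ht₂]; linear_combination (-1/4 : ℂ) * hd
      have h₁ne : ‖t₁‖ ≠ Real.sqrt 2 := fun h =>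
        hw (seg_of_root w t₁ t₂ hsum hprod h)
      have h₂ne : ‖t₂‖ ≠ Real.sqrt 2 := fun h =>
        hw (seg_of_root w t₂ t₁ (by rw [← hsum]; ring) (by rw [← hprod]; ring) h)
      have habs : ‖t₁‖ * ‖t₂‖ = 2 := by
        rw [← norm_mul, hprod]; simp
      -- one of the two roots has modulus > √2
      have hbig : Real.sqrt 2 < ‖t₁‖ ∨ Real.sqrt 2 < ‖t₂‖ := by
        by_contra h
        push_neg at h
        have h1 : ‖t₁‖ < Real.sqrt 2 := lt_of_le_of_ne h.1 h₁ne
        have h2 : ‖t₂‖ < Real.sqrt 2 := lt_of_le_of_ne h.2 h₂ne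
        nlinarith [s_sq, norm_nonneg t₁, norm_nonneg t₂]
      have main : ∀ t u : ℂ, t + u = w - c → t * u = 2 →
          Real.sqrt 2 < ‖t‖ →
          ∃ z, Real.sqrt 2 < ‖z - c‖ ∧ z + 2 / (z - c) = w := by
        intro t u hs hp hgt
        have ht0 : t ≠ 0 := by
          intro h; rw [h, zero_mul] at hp; exact two_ne_zero hp.symm
        refine ⟨c + t, by simpa using hgt, ?_⟩
        have h2t : 2 / t = u := by
          rw [eq_comm, eq_div_iff ht0, mul_comm, hp]
        have : c + t - c = t := by ring
        rw [this, h2t]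
        linear_combination hs
      rcases hbig with h | h
      · obtain ⟨z, hz1, hz2⟩ := main t₁ t₂ (by rw [hc]; exact hsum) hprod h
        exact ⟨z, hz1, hz2⟩
      · obtain ⟨z, hz1, hz2⟩ := main t₂ t₁ (by rw [hc, ← hsum]; ring)
          (by rw [← hprod]; ring) h
        exact ⟨z, hz1, hz2⟩
end
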